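/- arXiv:1007.3662 — 5 statements merged into one kernel-verified Lean document; each statement's English description precedes it below -/
import Mathlib

section
/- Let X be a Binomial(N, p) random variable with 0 < p < 1, and let n ≥ 1. Then for any function g : {0,1,...,N} → ℝ, Var g(X) ≥ ∑_{k=1}^{min{n,N}} [p^k / (k! (N)_k (1−p)^k)] · (E[(N−X)_k Δ^k[g(X)]])², where (a)_k = a(a−1)⋯(a−k+1) is the falling factorial; equality holds when n ≥ N. -/
/-- Forward difference operator on functions `ℕ → ℝ`. -/
noncomputable def fdiffN (g : ℕ → ℝ) : ℕ → ℝ := fun x => g (x + 1) - g x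

/-- Falling factorial `(a)ₖ = a(a−1)⋯(a−k+1)` with real argument. -/
noncomputable def fallFact (a : ℝ) (k : ℕ) : ℝ := ∏ i ∈ Finset.range k, (a - i)

noncomputable def mE (p : ℝ) (N : ℕ) (f : ℕ → ℝ) : ℝ :=
  ∑ x ∈ Finset.range (N + 1), (N.choose x : ℝ) * p ^ x * (1 - p) ^ (N - x) * f x

lemma fdiff_shift : ∀ (k : ℕ) (g : ℕ → ℝ),
    fdiffN^[k] (fun x => g (x + 1)) = fun x => fdiffN^[k] g (x + 1)
  | 0, g => rfl
  | (k+1), g => by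
    rw [Function.iterate_succ_apply, Function.iterate_succ_apply]
    have h : fdiffN (fun x => g (x + 1)) = fun x => fdiffN g (x + 1) := rfl
    rw [h, fdiff_shift k (fdiffN g)]

lemma mE_sub (p : ℝ) (N : ℕ) (u v : ℕ → ℝ) :
    mE p N (fun x => u x - v x) = mE p N u - mE p N v := by
  unfold mE
  rw [← Finset.sum_sub_distrib]
  exact Finset.sum_congr rfl fun x _ => by ring

lemma mE_fdiff (p : ℝ) (N : ℕ) (f : ℕ → ℝ) :
    mE p N (fdiffN f) = mE p N (fun x => f (x + 1)) - mE p N f := by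
  rw [← mE_sub]; rfl

lemma mE_one (p : ℝ) (N : ℕ) : mE p N (fun _ => 1) = 1 := by
  have h : mE p N (fun _ => 1) = (p + (1 - p)) ^ N := by
    rw [add_pow]
    exact Finset.sum_congr rfl fun x _ => by ring
  rw [h]; norm_num

lemma mE_succ (p : ℝ) (N : ℕ) (f : ℕ → ℝ) :
    mE p (N + 1) f = (1 - p) * mE p N f + p * mE p N (fun x => f (x + 1)) := by
  have h1 : (1 - p) * mE p N f
      = ∑ i ∈ Finset.range (N + 1), (N.choose i : ℝ) * p ^ i * (1 - p) ^ (N + 1 - i) * f i := by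
    rw [mE, Finset.mul_sum]
    refine Finset.sum_congr rfl fun i hi => ?_
    have hiN : i ≤ N := Nat.lt_succ_iff.mp (Finset.mem_range.mp hi)
    have : N + 1 - i = (N - i) + 1 := by omega
    rw [this]; ring
  have h2 : p * mE p N (fun x => f (x + 1))
      = ∑ i ∈ Finset.range (N + 1), (N.choose i : ℝ) * p ^ (i + 1) * (1 - p) ^ (N - i) * f (i + 1) := by
    rw [mE, Finset.mul_sum]
    exact Finset.sum_congr rfl fun i _ => by ring
  rw [h1, h2, mE, Finset.sum_range_succ']
  have h3 : ∀ i : ℕ, ((N + 1).choose (i + 1) : ℝ) * p ^ (i + 1) * (1 - p) ^ (N + 1 - (i + 1)) * f (i + 1)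
      = (N.choose i : ℝ) * p ^ (i + 1) * (1 - p) ^ (N - i) * f (i + 1)
        + (N.choose (i + 1) : ℝ) * p ^ (i + 1) * (1 - p) ^ (N - i) * f (i + 1) := by
    intro i
    rw [Nat.choose_succ_succ, Nat.succ_sub_succ]
    push_cast; ring
  rw [Finset.sum_congr rfl fun i _ => h3 i, Finset.sum_add_distrib]
  have hsub : ∀ i : ℕ, N + 1 - (i + 1) = N - i := fun i => by omega
  have hL : ∑ i ∈ Finset.range (N + 1), (N.choose (i + 1) : ℝ) * p ^ (i + 1) * (1 - p) ^ (N - i) * f (i + 1)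
      = ∑ i ∈ Finset.range N, (N.choose (i + 1) : ℝ) * p ^ (i + 1) * (1 - p) ^ (N - i) * f (i + 1) := by
    rw [Finset.sum_range_succ]
    simp [Nat.choose_succ_self]
  have hR : ∑ i ∈ Finset.range (N + 1), (N.choose i : ℝ) * p ^ i * (1 - p) ^ (N + 1 - i) * f i
      = (∑ i ∈ Finset.range N, (N.choose (i + 1) : ℝ) * p ^ (i + 1) * (1 - p) ^ (N - i) * f (i + 1))
        + ((N.choose 0 : ℝ) * p ^ 0 * (1 - p) ^ (N + 1 - 0) * f 0) := by
    rw [Finset.sum_range_succ' (fun i => (N.choose i : ℝ) * p ^ i * (1 - p) ^ (N + 1 - i) * f i) N]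
    congr 1
    exact Finset.sum_congr rfl fun i _ => by rw [hsub i]
  rw [hL, hR]
  simp only [Nat.choose_zero_right, Nat.cast_one, Nat.sub_zero, Nat.add_sub_cancel]
  ring

lemma mE_sq (p : ℝ) : ∀ (N : ℕ) (f : ℕ → ℝ),
    mE p N (fun x => f x ^ 2)
      = ∑ k ∈ Finset.range (N + 1),
          (N.choose k : ℝ) * (p * (1 - p)) ^ k * (mE p (N - k) (fdiffN^[k] f)) ^ 2 := by
  intro N
  induction N with
  | zero => intro f; simp [mE]
  | succ N ih =>
    intro f
    have hshift : (fun x => (fun y => f y ^ 2) (x + 1)) = fun x => (f (x + 1)) ^ 2 := rfl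
    rw [mE_succ, hshift, ih f, ih (fun x => f (x + 1))]
    -- rewrite each of the two sums and combine
    have hb : ∀ k : ℕ, mE p (N - k) (fdiffN^[k] fun x => f (x + 1))
        = mE p (N - k) (fun x => fdiffN^[k] f (x + 1)) := by
      intro k; rw [fdiff_shift]
    simp only [hb]
    rw [Finset.mul_sum, Finset.mul_sum, ← Finset.sum_add_distrib]
    have key : ∀ k ∈ Finset.range (N + 1),
        (1 - p) * ((N.choose k : ℝ) * (p * (1 - p)) ^ k * (mE p (N - k) (fdiffN^[k] f)) ^ 2)
          + p * ((N.choose k : ℝ) * (p * (1 - p)) ^ k * (mE p (N - k) (fun x => fdiffN^[k] f (x + 1))) ^ 2)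
        = (N.choose k : ℝ) * (p * (1 - p)) ^ k * (mE p (N + 1 - k) (fdiffN^[k] f)) ^ 2
          + (N.choose k : ℝ) * (p * (1 - p)) ^ (k + 1) * (mE p (N + 1 - (k + 1)) (fdiffN^[k + 1] f)) ^ 2 := by
      intro k hk
      have hkN : k ≤ N := Nat.lt_succ_iff.mp (Finset.mem_range.mp hk)
      have h1 : N + 1 - k = (N - k) + 1 := by omega
      have h2 : N + 1 - (k + 1) = N - k := by omega
      rw [h1, h2, mE_succ]
      have h3 : fdiffN^[k + 1] f = fdiffN (fdiffN^[k] f) := Function.iterate_succ_apply' fdiffN k f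
      rw [h3, mE_fdiff]
      ring
    rw [Finset.sum_congr rfl key, Finset.sum_add_distrib]
    -- now the target sum over range (N+2)
    have hsub : ∀ i : ℕ, N + 1 - (i + 1) = N - i := fun i => by omega
    rw [Finset.sum_range_succ'
      (fun k => ((N + 1).choose k : ℝ) * (p * (1 - p)) ^ k * (mE p (N + 1 - k) (fdiffN^[k] f)) ^ 2) (N + 1)]
    have h5 : ∀ i ∈ Finset.range (N + 1),
        ((N + 1).choose (i + 1) : ℝ) * (p * (1 - p)) ^ (i + 1) * (mE p (N + 1 - (i + 1)) (fdiffN^[i + 1] f)) ^ 2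
        = (N.choose (i + 1) : ℝ) * (p * (1 - p)) ^ (i + 1) * (mE p (N + 1 - (i + 1)) (fdiffN^[i + 1] f)) ^ 2
          + (N.choose i : ℝ) * (p * (1 - p)) ^ (i + 1) * (mE p (N + 1 - (i + 1)) (fdiffN^[i + 1] f)) ^ 2 := by
      intro i _
      rw [Nat.choose_succ_succ]
      push_cast; ring
    rw [Finset.sum_congr rfl h5, Finset.sum_add_distrib]
    have hA : ∑ i ∈ Finset.range (N + 1),
          (N.choose (i + 1) : ℝ) * (p * (1 - p)) ^ (i + 1) * (mE p (N + 1 - (i + 1)) (fdiffN^[i + 1] f)) ^ 2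
        + ((N + 1).choose 0 : ℝ) * (p * (1 - p)) ^ 0 * (mE p (N + 1 - 0) (fdiffN^[0] f)) ^ 2
      = ∑ k ∈ Finset.range (N + 1),
          (N.choose k : ℝ) * (p * (1 - p)) ^ k * (mE p (N + 1 - k) (fdiffN^[k] f)) ^ 2 := by
      rw [Finset.sum_range_succ'
        (fun k => (N.choose k : ℝ) * (p * (1 - p)) ^ k * (mE p (N + 1 - k) (fdiffN^[k] f)) ^ 2) N]
      rw [Finset.sum_range_succ]
      simp [Nat.choose_succ_self]
    linarith [hA]

lemma fallFact_cast : ∀ (k n : ℕ), k ≤ n → fallFact (n : ℝ) k = (n.descFactorial k : ℝ)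
  | 0, n, _ => by simp [fallFact]
  | (k+1), n, h => by
    have hk : k ≤ n := by omega
    rw [fallFact, Finset.prod_range_succ, ← fallFact, fallFact_cast k n hk,
      Nat.descFactorial_succ, Nat.cast_mul, Nat.cast_sub hk]
    ring

lemma fallFact_zero (m k : ℕ) (h : m < k) : fallFact (m : ℝ) k = 0 := by
  apply Finset.prod_eq_zero (Finset.mem_range.mpr h)
  simp

lemma natkey (N x k : ℕ) (h : x + k ≤ N) :
    N.choose x * (N - x).descFactorial k = N.descFactorial k * (N - k).choose x := by
  have hxk : x + k ≤ N := h
  have h1 := Nat.choose_mul (n := N) (Nat.le_add_right x k)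
  have h2 := Nat.choose_mul (n := N) (Nat.le_add_left k x)
  rw [Nat.add_sub_cancel_left] at h1
  rw [Nat.add_sub_cancel] at h2
  have h3 : (x + k).choose x = (x + k).choose k := by
    rw [← Nat.choose_symm (Nat.le_add_left k x), Nat.add_sub_cancel]
  have h4 : N.choose x * (N - x).choose k = N.choose k * (N - k).choose x := by
    rw [← h1, ← h2, h3]
  rw [Nat.descFactorial_eq_factorial_mul_choose, Nat.descFactorial_eq_factorial_mul_choose]
  calc N.choose x * (k.factorial * (N - x).choose k)
      = k.factorial * (N.choose x * (N - x).choose k) := by ring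
    _ = k.factorial * (N.choose k * (N - k).choose x) := by rw [h4]
    _ = k.factorial * N.choose k * (N - k).choose x := by ring

lemma mE_fall (p : ℝ) (N k : ℕ) (hk : k ≤ N) (f : ℕ → ℝ) :
    mE p N (fun x => fallFact ((N : ℝ) - x) k * f x)
      = (N.descFactorial k : ℝ) * (1 - p) ^ k * mE p (N - k) f := by
  unfold mE
  have hss : Finset.range (N - k + 1) ⊆ Finset.range (N + 1) :=
    Finset.range_subset_range.mpr (by omega)
  rw [← Finset.sum_subset hss ?_]
  · rw [Finset.mul_sum]
    refine Finset.sum_congr rfl fun x hx => ?_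
    beta_reduce
    have hxNk : x ≤ N - k := Nat.lt_succ_iff.mp (Finset.mem_range.mp hx)
    have hxN : x ≤ N := by omega
    have hxk : x + k ≤ N := by omega
    have hcast : (N : ℝ) - x = ((N - x : ℕ) : ℝ) := by
      rw [Nat.cast_sub hxN]
    have hkx : k ≤ N - x := by omega
    rw [hcast, fallFact_cast k (N - x) hkx]
    have hpow : N - x = (N - k - x) + k := by omega
    have hchoose : (N.choose x : ℝ) * ((N - x).descFactorial k : ℝ)
        = (N.descFactorial k : ℝ) * ((N - k).choose x : ℝ) := by
      rw [← Nat.cast_mul, ← Nat.cast_mul, natkey N x k hxk]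
    rw [hpow, pow_add, show N - k - x + k = N - x from by omega]
    linear_combination (p ^ x * ((1 - p) ^ (N - k - x) * (1 - p) ^ k) * f x) * hchoose
  · intro x hxmem hxnot
    have hxN : x ≤ N := Nat.lt_succ_iff.mp (Finset.mem_range.mp hxmem)
    have hxbig : N - x < k := by
      simp only [Finset.mem_range] at hxnot
      omega
    have hcast : (N : ℝ) - x = ((N - x : ℕ) : ℝ) := by rw [Nat.cast_sub hxN]
    beta_reduce
    rw [hcast, fallFact_zero (N - x) k hxbig]
    ring

lemma mE_const (p : ℝ) (N : ℕ) (c : ℝ) : mE p N (fun _ => c) = c := by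
  have h := mE_one p N
  unfold mE at h ⊢
  beta_reduce at h ⊢
  calc ∑ x ∈ Finset.range (N + 1), (N.choose x : ℝ) * p ^ x * (1 - p) ^ (N - x) * c
      = c * ∑ x ∈ Finset.range (N + 1), (N.choose x : ℝ) * p ^ x * (1 - p) ^ (N - x) * 1 := by
        rw [Finset.mul_sum]; exact Finset.sum_congr rfl fun x _ => by ring
    _ = c := by rw [h]; ring


/-- **Lower variance bound for the binomial distribution (Example 4.2).**
For `X ~ Binomial(N, p)` with `0 < p < 1` and any `g`,
`Var g(X) ≥ ∑_{k=1}^{min(n,N)} pᵏ/(k! (N)ₖ (1−p)ᵏ) (E[(N−X)ₖ Δᵏ g(X)])²`,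
with equality when `n ≥ N`. -/
theorem binomial_lower_variance_bound
    (N : ℕ) (p : ℝ) (hp0 : 0 < p) (hp1 : p < 1) (n : ℕ) (hn : 1 ≤ n) (g : ℕ → ℝ) :
    (let pmf : ℕ → ℝ := fun x => (N.choose x : ℝ) * p ^ x * (1 - p) ^ (N - x);
     let E : (ℕ → ℝ) → ℝ := fun f => ∑ x ∈ Finset.range (N + 1), pmf x * f x;
     let Var : ℝ := E (fun x => (g x - E g) ^ 2);
     let S : ℝ := ∑ k ∈ Finset.Icc 1 (min n N),
        p ^ k / ((Nat.factorial k : ℝ) * fallFact (N : ℝ) k * (1 - p) ^ k) *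
          (E (fun x => fallFact ((N : ℝ) - x) k * fdiffN^[k] g x)) ^ 2;
     S ≤ Var ∧ (N ≤ n → Var = S)) := by

  intro pmf E Var S
  have hq0 : (0 : ℝ) < 1 - p := by linarith
  have hE : ∀ f : ℕ → ℝ, E f = mE p N f := fun f => rfl
  set s : ℕ → ℝ := fun k => mE p (N - k) (fdiffN^[k] g) with hs
  -- splitting a range sum
  have hsplit : ∀ F : ℕ → ℝ, ∑ k ∈ Finset.range (N + 1), F k
      = F 0 + ∑ k ∈ Finset.Icc 1 N, F k := by
    intro F
    rw [Finset.range_eq_Ico, Finset.sum_eq_sum_Ico_succ_bot (Nat.succ_pos N) F,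
      Nat.succ_eq_add_one, Finset.Ico_add_one_right_eq_Icc]
  -- the centered function
  have h00 : mE p N (fun x => g x - mE p N g) = 0 := by
    have h1 := mE_sub p N g (fun _ => mE p N g)
    rw [mE_const] at h1
    rw [h1, sub_self]
  have hDk : ∀ k : ℕ, fdiffN^[k + 1] (fun x => g x - mE p N g) = fdiffN^[k + 1] g := by
    intro k
    rw [Function.iterate_succ_apply, Function.iterate_succ_apply]
    congr 1
    funext x
    simp only [fdiffN]
    ring
  have hVar : Var = ∑ k ∈ Finset.Icc 1 N, (N.choose k : ℝ) * (p * (1 - p)) ^ k * s k ^ 2 := by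
    have h0 : Var = mE p N (fun x => (g x - mE p N g) ^ 2) := rfl
    rw [h0, mE_sq p N (fun x => g x - mE p N g), hsplit]
    simp only [Function.iterate_zero, id_eq, Nat.sub_zero, pow_zero, Nat.choose_zero_right,
      Nat.cast_one, one_mul, mul_one, h00]
    rw [zero_pow (two_ne_zero), zero_add]
    refine Finset.sum_congr rfl fun k hk => ?_
    have hk1 : 1 ≤ k := (Finset.mem_Icc.mp hk).1
    obtain ⟨j, rfl⟩ : ∃ j, k = j + 1 := ⟨k - 1, by omega⟩
    rw [hDk j]
  have hS : S = ∑ k ∈ Finset.Icc 1 (min n N), (N.choose k : ℝ) * (p * (1 - p)) ^ k * s k ^ 2 := by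
    have h0 : S = ∑ k ∈ Finset.Icc 1 (min n N),
        p ^ k / ((Nat.factorial k : ℝ) * fallFact (N : ℝ) k * (1 - p) ^ k) *
          (mE p N (fun x => fallFact ((N : ℝ) - x) k * fdiffN^[k] g x)) ^ 2 := rfl
    rw [h0]
    refine Finset.sum_congr rfl fun k hk => ?_
    have hk1 : 1 ≤ k := (Finset.mem_Icc.mp hk).1
    have hkN : k ≤ N := le_trans (Finset.mem_Icc.mp hk).2 (min_le_right n N)
    rw [mE_fall p N k hkN, fallFact_cast k N hkN,
      Nat.descFactorial_eq_factorial_mul_choose, mul_pow p (1 - p) k]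
    have hfac : ((Nat.factorial k : ℕ) : ℝ) ≠ 0 := Nat.cast_ne_zero.mpr (Nat.factorial_ne_zero k)
    have hC : ((N.choose k : ℕ) : ℝ) ≠ 0 := Nat.cast_ne_zero.mpr (Nat.choose_pos hkN).ne'
    have hqne : (1 - p) ^ k ≠ 0 := pow_ne_zero k hq0.ne'
    push_cast
    field_simp
    ring
  constructor
  · rw [hS, hVar]
    refine Finset.sum_le_sum_of_subset_of_nonneg
      (Finset.Icc_subset_Icc_right (min_le_right n N)) fun k _ _ => ?_
    exact mul_nonneg (mul_nonneg (Nat.cast_nonneg _)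
      (pow_nonneg (mul_nonneg hp0.le hq0.le) k)) (sq_nonneg _)
  · intro hNn
    rw [hS, hVar, min_eq_right hNn]
end

section
/- Let X be uniformly distributed on {1, 2, ..., N} and let n ≥ 1. Then for any function g : {1,...,N} → ℝ, Var g(X) ≥ N ∑_{k=1}^{min{n,N−1}} [(2k+1)(N−k−1)! / ((k!)² (N+k)!)] · (E[[X]_k (N−X)_k Δ^k[g(X)]])², with equality when n ≥ N−1. -/
/-- Rising factorial `[a]ₖ = a(a+1)⋯(a+k−1)` with real argument. -/
noncomputable def risFact (a : ℝ) (k : ℕ) : ℝ := ∏ i ∈ Finset.range k, (a + i)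

open Polynomial Finset Matrix

lemma shift_sub_coeff (p : ℝ[X]) (r : ℝ) (d : ℕ) (hp : p.natDegree ≤ d + 1) :
    (p.comp (X + C r) - p).natDegree ≤ d ∧
      (p.comp (X + C r) - p).coeff d = ((d : ℝ) + 1) * r * p.coeff (d + 1) := by
  have hc : ∀ n : ℕ, (p.comp (X + C r)).coeff n = (hasseDeriv n p).eval r := by
    intro n; rw [← taylor_apply, taylor_coeff]
  constructor
  · rw [natDegree_le_iff_coeff_eq_zero]
    intro m hm
    have hdeg : (hasseDeriv m p).natDegree < 1 := by
      have := natDegree_hasseDeriv_le p m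
      omega
    rw [coeff_sub, hc, eval_eq_sum_range' hdeg]
    simp [hasseDeriv_coeff]
  · have hdeg : (hasseDeriv d p).natDegree < 2 := by
      have := natDegree_hasseDeriv_le p d
      omega
    rw [coeff_sub, hc, eval_eq_sum_range' hdeg]
    rw [Finset.sum_range_succ, Finset.sum_range_one]
    simp only [hasseDeriv_coeff, pow_zero, mul_one, pow_one, Nat.zero_add, Nat.choose_self]
    rw [show 1 + d = d + 1 by omega, Nat.choose_succ_self_right]
    push_cast
    ring

noncomputable def Mstep (p : ℝ[X]) : ℝ[X] := p.comp (X + C (-1 : ℝ)) - p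

lemma Mstep_natDegree_coeff (p : ℝ[X]) (d : ℕ) (hp : p.natDegree ≤ d + 1) :
    (Mstep p).natDegree ≤ d ∧ (Mstep p).coeff d = -(((d : ℝ) + 1) * p.coeff (d + 1)) := by
  obtain ⟨h1, h2⟩ := shift_sub_coeff p (-1) d hp
  exact ⟨h1, by rw [Mstep, h2]; ring⟩

lemma Mstep_eval (p : ℝ[X]) (t : ℝ) : (Mstep p).eval t = p.eval (t - 1) - p.eval t := by
  simp [Mstep, eval_comp, sub_eq_add_neg]

lemma fdiffN_eval (p : ℝ[X]) :
    fdiffN (fun y : ℕ => p.eval (y : ℝ)) =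
      fun y : ℕ => (p.comp (X + C (1 : ℝ)) - p).eval (y : ℝ) := by
  funext y
  simp [fdiffN, eval_comp]

lemma fdiff_iter_poly : ∀ (k : ℕ) (p : ℝ[X]), p.natDegree ≤ k → ∀ x : ℕ,
    fdiffN^[k] (fun y : ℕ => p.eval (y : ℝ)) x = (k.factorial : ℝ) * p.coeff k := by
  intro k
  induction k with
  | zero =>
    intro p hp x
    have h1 : p.natDegree < 1 := by omega
    simp [eval_eq_sum_range' h1]
  | succ k ih =>
    intro p hp x
    rw [Function.iterate_succ_apply, fdiffN_eval]
    obtain ⟨h1, h2⟩ := shift_sub_coeff p 1 k hp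
    rw [ih _ h1 x, h2, Nat.factorial_succ]
    push_cast
    ring

lemma Mstep_iter (p : ℝ[X]) (D : ℕ) (hp : p.natDegree ≤ D) :
    ∀ j, j ≤ D → (Mstep^[j] p).natDegree ≤ D - j ∧
      (Mstep^[j] p).coeff (D - j) = (-1 : ℝ) ^ j * (D.descFactorial j : ℝ) * p.coeff D := by
  intro j
  induction j with
  | zero => intro _; simpa using hp
  | succ j ih =>
    intro hj
    obtain ⟨h1, h2⟩ := ih (by omega)
    have he : D - j = (D - (j + 1)) + 1 := by omega
    rw [he] at h1 h2
    rw [Function.iterate_succ_apply']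
    obtain ⟨g1, g2⟩ := Mstep_natDegree_coeff _ _ h1
    refine ⟨g1, ?_⟩
    rw [g2, h2, Nat.descFactorial_succ]
    have : ((D - j : ℕ) : ℝ) = ((D - (j + 1) : ℕ) : ℝ) + 1 := by
      rw [he]; push_cast; ring
    push_cast [this]
    ring

noncomputable def Upoly (N k : ℕ) : ℝ[X] :=
  (∏ i ∈ range k, (X + C (i : ℝ))) * (∏ i ∈ range k, (C (N : ℝ) - X - C (i : ℝ)))

lemma Upoly_natDegree_coeff (N k : ℕ) :
    (Upoly N k).natDegree ≤ 2 * k ∧ (Upoly N k).coeff (2 * k) = (-1 : ℝ) ^ k := by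
  have hW : Upoly N k = C ((-1 : ℝ) ^ k) *
      ((∏ i ∈ range k, (X + C (i : ℝ))) * ∏ i ∈ range k, (X - C ((N : ℝ) - i))) := by
    rw [Upoly]
    have : ∏ i ∈ range k, (C (N : ℝ) - X - C (i : ℝ)) =
        ∏ i ∈ range k, ((-1 : ℝ[X]) * (X - C ((N : ℝ) - i))) := by
      refine Finset.prod_congr rfl fun i _ => ?_
      rw [map_sub]
      ring
    rw [this, Finset.prod_mul_distrib, Finset.prod_const, Finset.card_range]
    rw [show ((-1 : ℝ[X]) ^ k) = C ((-1 : ℝ) ^ k) by rw [map_pow, map_neg, _root_.map_one]]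
    ring
  have hA : (∏ i ∈ range k, (X + C (i : ℝ))).Monic :=
    monic_prod_of_monic _ _ fun i _ => monic_X_add_C _
  have hB : (∏ i ∈ range k, (X - C ((N : ℝ) - i))).Monic :=
    monic_prod_of_monic _ _ fun i _ => monic_X_sub_C _
  have hAB : ((∏ i ∈ range k, (X + C (i : ℝ))) * ∏ i ∈ range k, (X - C ((N : ℝ) - i))).Monic :=
    hA.mul hB
  have hdeg : ((∏ i ∈ range k, (X + C (i : ℝ))) *
      ∏ i ∈ range k, (X - C ((N : ℝ) - i))).natDegree = 2 * k := by
    rw [hA.natDegree_mul hB, natDegree_prod_of_monic _ _ (fun i _ => monic_X_add_C _),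
      natDegree_prod_of_monic _ _ (fun i _ => monic_X_sub_C _)]
    simp only [natDegree_X_add_C, natDegree_X_sub_C, Finset.sum_const, Finset.card_range,
      smul_eq_mul, mul_one]
    ring
  constructor
  · rw [hW]
    refine le_trans (natDegree_C_mul_le _ _) ?_
    rw [hdeg]
  · rw [hW, coeff_C_mul]
    have : ((∏ i ∈ range k, (X + C (i : ℝ))) *
        ∏ i ∈ range k, (X - C ((N : ℝ) - i))).coeff (2 * k) = 1 := by
      rw [← hdeg]; exact hAB.coeff_natDegree
    rw [this, mul_one]

lemma Upoly_eval_zero_left {N k m : ℕ} (hm : m < k) : (Upoly N k).eval (-(m : ℝ)) = 0 := by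
  rw [Upoly, eval_mul, eval_prod]
  rw [Finset.prod_eq_zero (Finset.mem_range.mpr hm) (by simp)]
  ring

lemma Upoly_eval_zero_right {N k m : ℕ} (hm : m < k) : (Upoly N k).eval ((N : ℝ) - m) = 0 := by
  rw [Upoly, eval_mul]
  refine mul_eq_zero_of_right _ ?_
  rw [eval_prod]
  exact Finset.prod_eq_zero (Finset.mem_range.mpr hm) (by simp)

lemma Mstep_iter_vanish (N k : ℕ) : ∀ j m : ℕ, m + j < k →
    (Mstep^[j] (Upoly N k)).eval (-(m : ℝ)) = 0 ∧
      (Mstep^[j] (Upoly N k)).eval ((N : ℝ) - m) = 0 := by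
  intro j
  induction j with
  | zero =>
    intro m hm
    exact ⟨Upoly_eval_zero_left (by omega), Upoly_eval_zero_right (by omega)⟩
  | succ j ih =>
    intro m hm
    rw [Function.iterate_succ_apply', Mstep_eval, Mstep_eval]
    have h1 := ih m (by omega)
    have h2 := ih (m + 1) (by omega)
    constructor
    · have e : (-(m : ℝ)) - 1 = -(((m + 1 : ℕ)) : ℝ) := by push_cast; ring
      rw [e, h2.1, h1.1, sub_zero]
    · have e : ((N : ℝ) - m) - 1 = (N : ℝ) - ((m + 1 : ℕ) : ℝ) := by push_cast; ring
      rw [e, h2.2, h1.2, sub_zero]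

lemma sum_Icc_one (N : ℕ) (q : ℕ → ℝ) :
    ∑ x ∈ Icc 1 N, q x = ∑ i ∈ range N, q (i + 1) := by
  rw [← Finset.Ico_add_one_right_eq_Icc, Finset.sum_Ico_eq_sum_range]
  rw [Nat.add_sub_cancel]
  exact Finset.sum_congr rfl fun i _ => by rw [add_comm]

lemma sbp_step (N : ℕ) (p : ℝ[X]) (h : ℕ → ℝ)
    (h0 : p.eval 0 = 0) (hNv : p.eval (N : ℝ) = 0) :
    ∑ x ∈ Icc 1 N, p.eval (x : ℝ) * fdiffN h x
      = ∑ x ∈ Icc 1 N, (Mstep p).eval (x : ℝ) * h x := by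
  rw [sum_Icc_one, sum_Icc_one]
  have hM : ∀ i : ℕ, (Mstep p).eval (((i + 1 : ℕ)) : ℝ) =
      p.eval (i : ℝ) - p.eval (((i + 1 : ℕ)) : ℝ) := by
    intro i
    rw [Mstep_eval]
    have e : (((i + 1 : ℕ)) : ℝ) - 1 = (i : ℝ) := by push_cast; ring
    rw [e]
  have key : ∑ i ∈ range N, p.eval (i : ℝ) * h (i + 1)
      = ∑ i ∈ range N, p.eval (((i + 1 : ℕ)) : ℝ) * h (i + 1 + 1) := by
    have h1 := Finset.sum_range_succ' (fun i : ℕ => p.eval (i : ℝ) * h (i + 1)) N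
    have h2 := Finset.sum_range_succ (fun i : ℕ => p.eval (i : ℝ) * h (i + 1)) N
    have hF0 : p.eval ((0 : ℕ) : ℝ) * h (0 + 1) = 0 := by
      rw [Nat.cast_zero, h0, zero_mul]
    have hFN : p.eval ((N : ℕ) : ℝ) * h (N + 1) = 0 := by
      rw [hNv, zero_mul]
    simp only [hF0, hFN, add_zero] at h1 h2
    rw [h2] at h1
    exact h1
  calc ∑ i ∈ range N, p.eval (((i + 1 : ℕ)) : ℝ) * fdiffN h (i + 1)
      = (∑ i ∈ range N, p.eval (((i + 1 : ℕ)) : ℝ) * h (i + 1 + 1))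
          - ∑ i ∈ range N, p.eval (((i + 1 : ℕ)) : ℝ) * h (i + 1) := by
        rw [← Finset.sum_sub_distrib]
        exact Finset.sum_congr rfl fun i _ => by rw [fdiffN]; ring
    _ = (∑ i ∈ range N, p.eval ((i : ℕ) : ℝ) * h (i + 1))
          - ∑ i ∈ range N, p.eval (((i + 1 : ℕ)) : ℝ) * h (i + 1) := by rw [← key]
    _ = ∑ i ∈ range N, (Mstep p).eval (((i + 1 : ℕ)) : ℝ) * h (i + 1) := by
        rw [← Finset.sum_sub_distrib]
        exact Finset.sum_congr rfl fun i _ => by rw [hM]; ring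

noncomputable def Qpoly (N k : ℕ) : ℝ[X] := Mstep^[k] (Upoly N k)

lemma key1 (N k : ℕ) (g : ℕ → ℝ) :
    ∑ x ∈ Icc 1 N, (Upoly N k).eval (x : ℝ) * fdiffN^[k] g x
      = ∑ x ∈ Icc 1 N, (Qpoly N k).eval (x : ℝ) * g x := by
  have aux : ∀ j, j ≤ k →
      ∑ x ∈ Icc 1 N, (Upoly N k).eval (x : ℝ) * fdiffN^[k] g x
        = ∑ x ∈ Icc 1 N, (Mstep^[j] (Upoly N k)).eval (x : ℝ) * fdiffN^[k - j] g x := by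
    intro j
    induction j with
    | zero => intro _; simp
    | succ j ih =>
      intro hj
      rw [ih (by omega)]
      have hke : k - j = (k - (j + 1)) + 1 := by omega
      have hfd : fdiffN^[k - j] g = fdiffN (fdiffN^[k - (j + 1)] g) := by
        rw [hke, Function.iterate_succ_apply']
      rw [hfd]
      have h0 : (Mstep^[j] (Upoly N k)).eval 0 = 0 := by
        have := (Mstep_iter_vanish N k j 0 (by omega)).1
        simpa using this
      have hNv : (Mstep^[j] (Upoly N k)).eval ((N : ℕ) : ℝ) = 0 := by
        have := (Mstep_iter_vanish N k j 0 (by omega)).2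
        simpa using this
      rw [sbp_step N _ _ h0 hNv, ← Function.iterate_succ_apply' Mstep j (Upoly N k)]
  have := aux k le_rfl
  simpa [Qpoly] using this

lemma Qpoly_natDegree_coeff (N k : ℕ) :
    (Qpoly N k).natDegree ≤ k ∧ (Qpoly N k).coeff k = ((2 * k).descFactorial k : ℝ) := by
  obtain ⟨hd, hc⟩ := Upoly_natDegree_coeff N k
  obtain ⟨h1, h2⟩ := Mstep_iter (Upoly N k) (2 * k) hd k (by omega)
  have he : 2 * k - k = k := by omega
  rw [he] at h1 h2
  refine ⟨h1, ?_⟩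
  rw [Qpoly, h2, hc]
  rw [show ((-1 : ℝ) ^ k * ((2 * k).descFactorial k : ℝ) * (-1 : ℝ) ^ k)
      = ((-1 : ℝ) ^ k * (-1 : ℝ) ^ k) * ((2 * k).descFactorial k : ℝ) by ring]
  rw [← pow_add, Even.neg_one_pow ⟨k, by ring⟩, one_mul]

lemma hockey_range (a M : ℕ) :
    ∑ i ∈ range (M + 1), i.choose a = (M + 1).choose (a + 1) := by
  induction M with
  | zero =>
    cases a with
    | zero => simp
    | succ a => simpa using (Nat.choose_eq_zero_of_lt (show 1 < a + 1 + 1 by omega)).symm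
  | succ M ih =>
    rw [Finset.sum_range_succ, ih]
    have h := Nat.choose_succ_succ (M + 1) a
    simp only [Nat.succ_eq_add_one] at h ⊢
    omega

lemma vandermonde_low : ∀ (b a M : ℕ),
    ∑ i ∈ range (M + 1), i.choose a * ((M - i).choose b) = (M + 1).choose (a + b + 1) := by
  intro b
  induction b with
  | zero =>
    intro a M
    simp only [Nat.choose_zero_right, Nat.mul_one, Nat.add_zero]
    exact hockey_range a M
  | succ b ihb =>
    intro a M
    induction M with
    | zero =>
      simp [Nat.choose_eq_zero_of_lt (show 1 < a + (b + 1) + 1 by omega)]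
    | succ M ihM =>
      rw [Finset.sum_range_succ]
      have hz : ((M + 1 - (M + 1)).choose (b + 1)) = 0 := by
        simp [Nat.choose_eq_zero_of_lt]
      rw [hz, Nat.mul_zero, Nat.add_zero]
      have hsplit : ∀ i ∈ range (M + 1), i.choose a * ((M + 1 - i).choose (b + 1)) =
          i.choose a * ((M - i).choose b) + i.choose a * ((M - i).choose (b + 1)) := by
        intro i hi
        rw [Finset.mem_range] at hi
        rw [show M + 1 - i = (M - i) + 1 by omega, Nat.choose_succ_succ, Nat.mul_add]
      rw [Finset.sum_congr rfl hsplit, Finset.sum_add_distrib, ihb a M, ihM]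
      have h := Nat.choose_succ_succ (M + 1) (a + b + 1)
      simp only [Nat.succ_eq_add_one, show a + (b + 1) + 1 = a + b + 1 + 1 from by omega] at h ⊢
      omega

lemma prod_asc (a k : ℕ) : ∏ i ∈ range k, ((a : ℝ) + i) = (a.ascFactorial k : ℝ) := by
  induction k with
  | zero => simp
  | succ k ih =>
    rw [Finset.prod_range_succ, ih, Nat.ascFactorial_succ]
    push_cast
    ring

lemma prod_desc (a k : ℕ) : ∏ i ∈ range k, ((a : ℝ) - i) = (a.descFactorial k : ℝ) := by
  induction k with
  | zero => simp
  | succ k ih =>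
    rw [Finset.prod_range_succ, ih, Nat.descFactorial_succ]
    by_cases h : k ≤ a
    · push_cast [h]
      ring
    · rw [Nat.descFactorial_eq_zero_iff_lt.mpr (by omega)]
      simp

lemma Upoly_eval_pt (N k x : ℕ) (hx1 : 1 ≤ x) (hxN : x ≤ N) :
    (Upoly N k).eval (x : ℝ) =
      ((k.factorial : ℝ)) ^ 2 * ((x - 1 + k).choose k : ℝ) * (((N - x).choose k : ℝ)) := by
  rw [Upoly, eval_mul, eval_prod, eval_prod]
  have e1 : ∀ i ∈ range k, eval (x : ℝ) (X + C (i : ℝ)) = (x : ℝ) + i := by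
    intro i _; simp
  have e2 : ∀ i ∈ range k, eval (x : ℝ) (C (N : ℝ) - X - C (i : ℝ)) =
      (((N - x : ℕ)) : ℝ) - i := by
    intro i _
    have : (((N - x : ℕ)) : ℝ) = (N : ℝ) - x := by
      push_cast [hxN]
      ring
    simp [this]
  rw [Finset.prod_congr rfl e1, Finset.prod_congr rfl e2, prod_asc, prod_desc]
  have hasc : x.ascFactorial k = k.factorial * ((x - 1 + k).choose k) := by
    have h := Nat.ascFactorial_eq_factorial_mul_choose (x - 1) k
    rw [show x - 1 + 1 = x from by omega] at h
    exact h
  have hdesc : (N - x).descFactorial k = k.factorial * ((N - x).choose k) :=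
    Nat.descFactorial_eq_factorial_mul_choose _ _
  rw [hasc, hdesc]
  push_cast
  ring

lemma Upoly_sum (N k : ℕ) (hN : 1 ≤ N) :
    ∑ x ∈ Icc 1 N, (Upoly N k).eval (x : ℝ)
      = ((k.factorial : ℝ)) ^ 2 * (((N + k).choose (2 * k + 1) : ℝ)) := by
  have hpt : ∀ x ∈ Icc 1 N, (Upoly N k).eval (x : ℝ) =
      ((k.factorial : ℝ)) ^ 2 * (((x - 1 + k).choose k * ((N - x).choose k) : ℕ) : ℝ) := by
    intro x hx
    rw [Finset.mem_Icc] at hx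
    rw [Upoly_eval_pt N k x hx.1 hx.2]
    push_cast
    ring
  rw [Finset.sum_congr rfl hpt, ← Finset.mul_sum]
  congr 1
  rw [sum_Icc_one]
  have e : ∀ i : ℕ, (((i + 1 - 1 + k).choose k * ((N - (i + 1)).choose k) : ℕ) : ℝ)
      = (((i + k).choose k * ((N - 1 - i).choose k) : ℕ) : ℝ) := by
    intro i
    rw [show i + 1 - 1 + k = i + k from by omega, show N - (i + 1) = N - 1 - i from by omega]
  rw [Finset.sum_congr rfl fun i _ => e i, ← Nat.cast_sum]
  congr 1
  -- shift: ∑ i ∈ range N, (i+k).choose k * (N-1-i).choose k = (N+k).choose (2k+1)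
  have hzero : ∑ i ∈ range k, i.choose k * ((N + k - 1 - i).choose k) = 0 := by
    refine Finset.sum_eq_zero fun i hi => ?_
    rw [Finset.mem_range] at hi
    rw [Nat.choose_eq_zero_of_lt hi, Nat.zero_mul]
  have hV := vandermonde_low k k (N + k - 1)
  have hNk : N + k - 1 + 1 = k + N := by omega
  rw [hNk] at hV
  calc ∑ i ∈ range N, (i + k).choose k * ((N - 1 - i).choose k)
      = ∑ i ∈ range N, (k + i).choose k * ((N + k - 1 - (k + i)).choose k) := by
        refine Finset.sum_congr rfl fun i _ => ?_
        congr 2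
        · omega
        · omega
    _ = ∑ i ∈ range (k + N), i.choose k * ((N + k - 1 - i).choose k) := by
        rw [Finset.sum_range_add (fun i => i.choose k * ((N + k - 1 - i).choose k)) k N, hzero,
          Nat.zero_add]
    _ = (N + k).choose (2 * k + 1) := by
        rw [hV]
        congr 1
        · omega
        · omega

noncomputable def nrm (N k : ℕ) : ℝ :=
  (((2 * k).factorial : ℝ)) * ((k.factorial : ℝ)) ^ 2 * (((N + k).choose (2 * k + 1) : ℕ) : ℝ)

lemma inner_Qpoly_le (N : ℕ) (hN : 1 ≤ N) {k l : ℕ} (hlk : l ≤ k) :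
    ∑ x ∈ Icc 1 N, (Qpoly N k).eval (x : ℝ) * (Qpoly N l).eval (x : ℝ)
      = if l = k then nrm N k else 0 := by
  have hgl := key1 N k (fun y : ℕ => (Qpoly N l).eval (y : ℝ))
  have hfd : ∀ x : ℕ, fdiffN^[k] (fun y : ℕ => (Qpoly N l).eval (y : ℝ)) x
      = (k.factorial : ℝ) * (Qpoly N l).coeff k :=
    fdiff_iter_poly k _ (le_trans (Qpoly_natDegree_coeff N l).1 hlk)
  have hL : ∑ x ∈ Icc 1 N, (Qpoly N k).eval (x : ℝ) * (Qpoly N l).eval (x : ℝ)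
      = ((k.factorial : ℝ) * (Qpoly N l).coeff k) * ∑ x ∈ Icc 1 N, (Upoly N k).eval (x : ℝ) := by
    rw [Finset.mul_sum, ← hgl]
    refine Finset.sum_congr rfl fun x _ => ?_
    rw [hfd x]
    ring
  rw [hL, Upoly_sum N k hN]
  by_cases h : l = k
  · subst h
    rw [if_pos rfl, (Qpoly_natDegree_coeff N l).2, nrm]
    have hnat : l.factorial * (2 * l).descFactorial l = (2 * l).factorial := by
      rw [Nat.descFactorial_eq_factorial_mul_choose]
      have h2 := Nat.choose_mul_factorial_mul_factorial (show l ≤ 2 * l by omega)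
      rw [show 2 * l - l = l from by omega] at h2
      calc l.factorial * (l.factorial * ((2 * l).choose l))
          = (2 * l).choose l * l.factorial * l.factorial := by ring
        _ = (2 * l).factorial := h2
    have hc : (l.factorial : ℝ) * ((2 * l).descFactorial l : ℝ) = ((2 * l).factorial : ℝ) := by
      rw [← Nat.cast_mul, hnat]
    calc (l.factorial : ℝ) * ((2 * l).descFactorial l : ℝ)
          * ((l.factorial : ℝ) ^ 2 * (((N + l).choose (2 * l + 1) : ℕ) : ℝ))
        = ((l.factorial : ℝ) * ((2 * l).descFactorial l : ℝ)) * (l.factorial : ℝ) ^ 2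
            * (((N + l).choose (2 * l + 1) : ℕ) : ℝ) := by ring
      _ = (((2 * l).factorial : ℝ)) * ((l.factorial : ℝ)) ^ 2
            * (((N + l).choose (2 * l + 1) : ℕ) : ℝ) := by rw [hc]

  · rw [if_neg h]
    have : (Qpoly N l).coeff k = 0 :=
      coeff_eq_zero_of_natDegree_lt (lt_of_le_of_lt (Qpoly_natDegree_coeff N l).1 (by omega))
    rw [this]
    ring

lemma inner_Qpoly (N : ℕ) (hN : 1 ≤ N) (k l : ℕ) :
    ∑ x ∈ Icc 1 N, (Qpoly N k).eval (x : ℝ) * (Qpoly N l).eval (x : ℝ)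
      = if l = k then nrm N k else 0 := by
  rcases le_total l k with h | h
  · exact inner_Qpoly_le N hN h
  · rw [show (∑ x ∈ Icc 1 N, (Qpoly N k).eval (x : ℝ) * (Qpoly N l).eval (x : ℝ))
        = ∑ x ∈ Icc 1 N, (Qpoly N l).eval (x : ℝ) * (Qpoly N k).eval (x : ℝ) from
      Finset.sum_congr rfl fun x _ => mul_comm _ _]
    rw [inner_Qpoly_le N hN h]
    by_cases hkl : k = l
    · subst hkl
      simp
    · rw [if_neg hkl, if_neg fun h' => hkl h'.symm]

lemma nrm_pos (N k : ℕ) (hk : k < N) : 0 < nrm N k := by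
  have h1 : 0 < (N + k).choose (2 * k + 1) := Nat.choose_pos (by omega)
  have := Nat.factorial_pos (2 * k)
  have := Nat.factorial_pos k
  rw [nrm]
  positivity

lemma kernel (N : ℕ) (hN : 1 ≤ N) (x y : ℕ) (hx : x ∈ Icc 1 N) (hy : y ∈ Icc 1 N) :
    ∑ k ∈ range N, (nrm N k)⁻¹ * ((Qpoly N k).eval (x : ℝ) * (Qpoly N k).eval (y : ℝ))
      = if x = y then 1 else 0 := by
  rw [Finset.mem_Icc] at hx hy
  set A : Matrix (Fin N) (Fin N) ℝ :=
    fun k i => (Real.sqrt (nrm N (k : ℕ)))⁻¹ * (Qpoly N (k : ℕ)).eval (((i : ℕ) + 1 : ℕ) : ℝ)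
    with hA
  have hsum : ∀ q : ℕ → ℝ, ∑ i : Fin N, q ((i : ℕ) + 1) = ∑ x ∈ Icc 1 N, q x := by
    intro q
    rw [sum_Icc_one, Finset.sum_range]
  have hAAT : A * Aᵀ = 1 := by
    ext k l
    rw [Matrix.mul_apply, Matrix.one_apply]
    have : ∀ i : Fin N, A k i * Aᵀ i l
        = (Real.sqrt (nrm N (k : ℕ)))⁻¹ * (Real.sqrt (nrm N (l : ℕ)))⁻¹
          * ((Qpoly N (k : ℕ)).eval (((i : ℕ) + 1 : ℕ) : ℝ)
            * (Qpoly N (l : ℕ)).eval (((i : ℕ) + 1 : ℕ) : ℝ)) := by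
      intro i
      rw [Matrix.transpose_apply, hA]
      ring
    rw [Finset.sum_congr rfl fun i _ => this i, ← Finset.mul_sum]
    rw [hsum (fun x => (Qpoly N (k : ℕ)).eval (x : ℝ) * (Qpoly N (l : ℕ)).eval (x : ℝ))]
    rw [inner_Qpoly N hN (k : ℕ) (l : ℕ)]
    by_cases hkl : k = l
    · subst hkl
      rw [if_pos rfl, if_pos rfl]
      have hpos := nrm_pos N (k : ℕ) k.isLt
      rw [← Real.sqrt_mul_self (le_of_lt hpos)]
      field_simp
      rw [Real.sq_sqrt (Real.sqrt_nonneg _)]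
    · rw [if_neg (by simpa [Fin.ext_iff] using fun h : (l : ℕ) = (k : ℕ) => hkl (Fin.ext h.symm)),
        if_neg hkl, mul_zero]
  have hATA : Aᵀ * A = 1 := mul_eq_one_comm.mp hAAT
  have hxI : x - 1 < N := by omega
  have hyI : y - 1 < N := by omega
  have hent := congrFun (congrFun hATA ⟨x - 1, hxI⟩) ⟨y - 1, hyI⟩
  rw [Matrix.mul_apply, Matrix.one_apply] at hent
  have hxx : (x - 1) + 1 = x := by omega
  have hyy : (y - 1) + 1 = y := by omega
  have : ∀ k : Fin N, Aᵀ ⟨x - 1, hxI⟩ k * A k ⟨y - 1, hyI⟩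
      = (nrm N (k : ℕ))⁻¹ * ((Qpoly N (k : ℕ)).eval (x : ℝ) * (Qpoly N (k : ℕ)).eval (y : ℝ)) := by
    intro k
    rw [Matrix.transpose_apply, hA]
    simp only [hxx, hyy]
    have hpos := nrm_pos N (k : ℕ) k.isLt
    rw [show (Real.sqrt (nrm N (k : ℕ)))⁻¹ * (Qpoly N (k : ℕ)).eval (x : ℝ)
        * ((Real.sqrt (nrm N (k : ℕ)))⁻¹ * (Qpoly N (k : ℕ)).eval (y : ℝ))
        = ((Real.sqrt (nrm N (k : ℕ)))⁻¹ * (Real.sqrt (nrm N (k : ℕ)))⁻¹)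
          * ((Qpoly N (k : ℕ)).eval (x : ℝ) * (Qpoly N (k : ℕ)).eval (y : ℝ)) from by ring]
    rw [← mul_inv, Real.mul_self_sqrt (le_of_lt hpos)]
  rw [Finset.sum_congr rfl fun k _ => this k] at hent
  rw [← Finset.sum_range (fun k => (nrm N k)⁻¹
    * ((Qpoly N k).eval (x : ℝ) * (Qpoly N k).eval (y : ℝ)))] at hent
  rw [hent]
  have : (⟨x - 1, hxI⟩ : Fin N) = ⟨y - 1, hyI⟩ ↔ x = y := by
    simp only [Fin.mk.injEq]
    constructor <;> intro h <;> omega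
  by_cases hxy : x = y
  · rw [if_pos hxy, if_pos (this.mpr hxy)]
  · rw [if_neg hxy, if_neg (fun h => hxy (this.mp h))]

lemma parseval (N : ℕ) (hN : 1 ≤ N) (f : ℕ → ℝ) :
    ∑ k ∈ range N, (nrm N k)⁻¹ * (∑ x ∈ Icc 1 N, (Qpoly N k).eval (x : ℝ) * f x) ^ 2
      = ∑ x ∈ Icc 1 N, (f x) ^ 2 := by
  calc ∑ k ∈ range N, (nrm N k)⁻¹ * (∑ x ∈ Icc 1 N, (Qpoly N k).eval (x : ℝ) * f x) ^ 2
      = ∑ k ∈ range N, ∑ x ∈ Icc 1 N, ∑ y ∈ Icc 1 N,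
          (f x * f y) * ((nrm N k)⁻¹ * ((Qpoly N k).eval (x : ℝ) * (Qpoly N k).eval (y : ℝ))) := by
        refine Finset.sum_congr rfl fun k _ => ?_
        rw [pow_two, Finset.sum_mul_sum, Finset.mul_sum]
        refine Finset.sum_congr rfl fun x _ => ?_
        rw [Finset.mul_sum]
        refine Finset.sum_congr rfl fun y _ => ?_
        ring
    _ = ∑ x ∈ Icc 1 N, ∑ y ∈ Icc 1 N,
          (f x * f y) * ∑ k ∈ range N,
            (nrm N k)⁻¹ * ((Qpoly N k).eval (x : ℝ) * (Qpoly N k).eval (y : ℝ)) := by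
        rw [Finset.sum_comm]
        refine Finset.sum_congr rfl fun x _ => ?_
        rw [Finset.sum_comm]
        refine Finset.sum_congr rfl fun y _ => ?_
        rw [Finset.mul_sum]
    _ = ∑ x ∈ Icc 1 N, ∑ y ∈ Icc 1 N, (f x * f y) * (if x = y then 1 else 0) := by
        refine Finset.sum_congr rfl fun x hx => Finset.sum_congr rfl fun y hy => ?_
        rw [kernel N hN x y hx hy]
    _ = ∑ x ∈ Icc 1 N, (f x) ^ 2 := by
        refine Finset.sum_congr rfl fun x hx => ?_
        have : ∀ y ∈ Icc 1 N, (f x * f y) * (if x = y then 1 else 0)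
            = if x = y then f x * f y else 0 := by
          intro y _
          by_cases h : x = y <;> simp [h]
        rw [Finset.sum_congr rfl this, Finset.sum_ite_eq]
        rw [if_pos hx, pow_two]

lemma Qpoly_zero_eval (N : ℕ) (t : ℝ) : (Qpoly N 0).eval t = 1 := by
  simp [Qpoly, Upoly]

lemma risfall (N k x : ℕ) :
    risFact (x : ℝ) k * fallFact ((N : ℝ) - (x : ℝ)) k = (Upoly N k).eval (x : ℝ) := by
  rw [Upoly, eval_mul, eval_prod, eval_prod, risFact, fallFact]
  congr 1
  · exact Finset.prod_congr rfl fun i _ => by simp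
  · exact Finset.prod_congr rfl fun i _ => by simp [sub_sub]

lemma coeff_eq_inv_nrm (N k : ℕ) (hk1 : 1 ≤ k) (hkN : k + 1 ≤ N) :
    (2 * (k : ℝ) + 1) * ((N - k - 1).factorial : ℝ)
        / (((k.factorial : ℝ)) ^ 2 * ((N + k).factorial : ℝ)) = (nrm N k)⁻¹ := by
  have hnat : (N + k).choose (2 * k + 1) * (2 * k + 1).factorial * (N - k - 1).factorial
      = (N + k).factorial := by
    have h := Nat.choose_mul_factorial_mul_factorial (show 2 * k + 1 ≤ N + k by omega)
    rw [show N + k - (2 * k + 1) = N - k - 1 from by omega] at h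
    exact h
  have hf : (2 * k + 1) * (2 * k).factorial = (2 * k + 1).factorial :=
    (Nat.factorial_succ (2 * k)).symm
  have hnat2 : (2 * k + 1) * (N - k - 1).factorial
      * ((2 * k).factorial * ((N + k).choose (2 * k + 1))) = (N + k).factorial := by
    calc (2 * k + 1) * (N - k - 1).factorial * ((2 * k).factorial * ((N + k).choose (2 * k + 1)))
        = (N + k).choose (2 * k + 1) * ((2 * k + 1) * (2 * k).factorial)
            * (N - k - 1).factorial := by ring
      _ = (N + k).choose (2 * k + 1) * (2 * k + 1).factorial * (N - k - 1).factorial := by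
          rw [hf]
      _ = (N + k).factorial := hnat
  have hR : (2 * (k : ℝ) + 1) * ((N - k - 1).factorial : ℝ)
      * (((2 * k).factorial : ℝ) * (((N + k).choose (2 * k + 1) : ℕ) : ℝ))
      = ((N + k).factorial : ℝ) := by
    have h := congrArg (fun m : ℕ => (m : ℝ)) hnat2
    push_cast at h
    linarith [h]
  refine eq_inv_of_mul_eq_one_left ?_
  rw [nrm]
  have hb : ((k.factorial : ℝ)) ^ 2 * ((N + k).factorial : ℝ) ≠ 0 := by
    have := k.factorial_pos
    have := (N + k).factorial_pos
    positivity
  rw [div_mul_eq_mul_div, div_eq_one_iff_eq hb]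
  linear_combination ((k.factorial : ℝ)) ^ 2 * hR

/-- **Lower variance bound for the discrete uniform distribution (Example 4.4).**
For `X ~ Uniform{1, …, N}` and any `g`,
`Var g(X) ≥ N ∑_{k=1}^{min(n,N−1)} ((2k+1)(N−k−1)! / ((k!)² (N+k)!)) (E[[X]ₖ (N−X)ₖ Δᵏ g(X)])²`,
with equality when `n ≥ N − 1`. -/
theorem discrete_uniform_lower_variance_bound
    (N : ℕ) (hN : 1 ≤ N) (n : ℕ) (hn : 1 ≤ n) (g : ℕ → ℝ) :
    (let E : (ℕ → ℝ) → ℝ := fun f => ∑ x ∈ Finset.Icc 1 N, (1 / (N : ℝ)) * f x;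
     let Var : ℝ := E (fun x => (g x - E g) ^ 2);
     let S : ℝ := (N : ℝ) * ∑ k ∈ Finset.Icc 1 (min n (N - 1)),
        ((2 * k + 1 : ℝ) * (Nat.factorial (N - k - 1)) /
            (((Nat.factorial k : ℝ)) ^ 2 * (Nat.factorial (N + k)))) *
          (E (fun x => risFact (x : ℝ) k * fallFact ((N : ℝ) - x) k * fdiffN^[k] g x)) ^ 2;
     S ≤ Var ∧ (N - 1 ≤ n → Var = S)) := by
  intro E Var S
  have hNR : (N : ℝ) ≠ 0 := by
    have : (0 : ℝ) < N := by exact_mod_cast hN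
    linarith
  set cE : ℕ → ℝ := fun k => (2 * (k : ℝ) + 1) * (((N - k - 1).factorial : ℕ) : ℝ)
      / (((k.factorial : ℕ) : ℝ) ^ 2 * (((N + k).factorial : ℕ) : ℝ)) with hcE
  set G : ℕ → ℝ := fun k => ∑ x ∈ Icc 1 N, (Qpoly N k).eval (x : ℝ) * g x with hGdef
  set Eg : ℝ := ∑ x ∈ Icc 1 N, (1 / (N : ℝ)) * g x with hEgdef
  have hS : S = (N : ℝ) * ∑ k ∈ Finset.Icc 1 (min n (N - 1)), cE k *
      (∑ x ∈ Finset.Icc 1 N, (1 / (N : ℝ)) *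
        (risFact (x : ℝ) k * fallFact ((N : ℝ) - x) k * fdiffN^[k] g x)) ^ 2 := rfl
  have hVar : Var = ∑ x ∈ Finset.Icc 1 N, (1 / (N : ℝ)) * (g x - Eg) ^ 2 := rfl
  have hEterm : ∀ k : ℕ, ∑ x ∈ Finset.Icc 1 N, (1 / (N : ℝ)) *
      (risFact (x : ℝ) k * fallFact ((N : ℝ) - x) k * fdiffN^[k] g x)
      = (1 / (N : ℝ)) * G k := by
    intro k
    rw [hGdef]
    calc ∑ x ∈ Finset.Icc 1 N, (1 / (N : ℝ)) *
        (risFact (x : ℝ) k * fallFact ((N : ℝ) - x) k * fdiffN^[k] g x)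
        = ∑ x ∈ Finset.Icc 1 N, (1 / (N : ℝ)) *
            ((Upoly N k).eval (x : ℝ) * fdiffN^[k] g x) := by
          refine Finset.sum_congr rfl fun x _ => ?_
          rw [← risfall]
      _ = (1 / (N : ℝ)) * ∑ x ∈ Finset.Icc 1 N, (Upoly N k).eval (x : ℝ) * fdiffN^[k] g x := by
          rw [Finset.mul_sum]
      _ = (1 / (N : ℝ)) * ∑ x ∈ Finset.Icc 1 N, (Qpoly N k).eval (x : ℝ) * g x := by
          rw [key1 N k g]
  have hsumf : ∑ x ∈ Finset.Icc 1 N, (g x - Eg) = 0 := by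
    rw [Finset.sum_sub_distrib, Finset.sum_const, Nat.card_Icc]
    rw [show N + 1 - 1 = N from by omega, nsmul_eq_mul]
    have hEg : Eg = (1 / (N : ℝ)) * ∑ x ∈ Finset.Icc 1 N, g x := by
      rw [hEgdef, Finset.mul_sum]
    rw [hEg]
    field_simp
    ring
  have hinner1 : ∀ k, 1 ≤ k → ∑ x ∈ Finset.Icc 1 N, (Qpoly N k).eval (x : ℝ) = 0 := by
    intro k hk
    have h := inner_Qpoly N hN k 0
    rw [if_neg (by omega)] at h
    rw [← h]
    exact Finset.sum_congr rfl fun x _ => by rw [Qpoly_zero_eval, mul_one]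
  have hip : ∀ k, 1 ≤ k →
      ∑ x ∈ Finset.Icc 1 N, (Qpoly N k).eval (x : ℝ) * (g x - Eg) = G k := by
    intro k hk
    calc ∑ x ∈ Finset.Icc 1 N, (Qpoly N k).eval (x : ℝ) * (g x - Eg)
        = (∑ x ∈ Finset.Icc 1 N, (Qpoly N k).eval (x : ℝ) * g x)
            - Eg * ∑ x ∈ Finset.Icc 1 N, (Qpoly N k).eval (x : ℝ) := by
          rw [Finset.mul_sum, ← Finset.sum_sub_distrib]
          exact Finset.sum_congr rfl fun x _ => by ring
      _ = G k := by rw [hinner1 k hk, mul_zero, sub_zero, hGdef]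
  have hip0 : ∑ x ∈ Finset.Icc 1 N, (Qpoly N 0).eval (x : ℝ) * (g x - Eg) = 0 := by
    rw [show (∑ x ∈ Finset.Icc 1 N, (Qpoly N 0).eval (x : ℝ) * (g x - Eg))
        = ∑ x ∈ Finset.Icc 1 N, (g x - Eg) from
      Finset.sum_congr rfl fun x _ => by rw [Qpoly_zero_eval, one_mul]]
    exact hsumf
  have hrange : range N = insert 0 (Finset.Icc 1 (N - 1)) := by
    ext i
    simp only [Finset.mem_range, Finset.mem_insert, Finset.mem_Icc]
    omega
  have hVar2 : Var = (1 / (N : ℝ)) * ∑ k ∈ Finset.Icc 1 (N - 1), (nrm N k)⁻¹ * (G k) ^ 2 := by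
    rw [hVar]
    have hpars := parseval N hN (fun x => g x - Eg)
    calc ∑ x ∈ Finset.Icc 1 N, (1 / (N : ℝ)) * (g x - Eg) ^ 2
        = (1 / (N : ℝ)) * ∑ x ∈ Finset.Icc 1 N, (g x - Eg) ^ 2 := by rw [Finset.mul_sum]
      _ = (1 / (N : ℝ)) * ∑ k ∈ range N, (nrm N k)⁻¹ *
            (∑ x ∈ Finset.Icc 1 N, (Qpoly N k).eval (x : ℝ) * (g x - Eg)) ^ 2 := by
          rw [hpars]
      _ = (1 / (N : ℝ)) * ∑ k ∈ Finset.Icc 1 (N - 1), (nrm N k)⁻¹ * (G k) ^ 2 := by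
          congr 1
          rw [hrange, Finset.sum_insert (by simp)]
          rw [hip0]
          rw [show ((0 : ℝ)) ^ 2 = 0 from by norm_num, mul_zero, zero_add]
          refine Finset.sum_congr rfl fun k hk => ?_
          rw [Finset.mem_Icc] at hk
          rw [hip k hk.1]
  have hTfull : (N : ℝ) * ∑ k ∈ Finset.Icc 1 (N - 1), cE k * ((1 / (N : ℝ)) * G k) ^ 2
      = (1 / (N : ℝ)) * ∑ k ∈ Finset.Icc 1 (N - 1), (nrm N k)⁻¹ * (G k) ^ 2 := by
    rw [Finset.mul_sum, Finset.mul_sum]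
    refine Finset.sum_congr rfl fun k hk => ?_
    rw [Finset.mem_Icc] at hk
    rw [hcE]
    simp only []
    rw [coeff_eq_inv_nrm N k hk.1 (by omega)]
    have hnrm := nrm_pos N k (by omega)
    field_simp
  have hSmin : S = (N : ℝ) * ∑ k ∈ Finset.Icc 1 (min n (N - 1)), cE k *
      ((1 / (N : ℝ)) * G k) ^ 2 := by
    rw [hS]
    congr 1
    exact Finset.sum_congr rfl fun k _ => by rw [hEterm k]
  have hVarT : Var = (N : ℝ) * ∑ k ∈ Finset.Icc 1 (N - 1), cE k *
      ((1 / (N : ℝ)) * G k) ^ 2 := by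
    rw [hVar2, ← hTfull]
  have hle : ∑ k ∈ Finset.Icc 1 (min n (N - 1)), cE k * ((1 / (N : ℝ)) * G k) ^ 2
      ≤ ∑ k ∈ Finset.Icc 1 (N - 1), cE k * ((1 / (N : ℝ)) * G k) ^ 2 := by
    refine Finset.sum_le_sum_of_subset_of_nonneg
      (Finset.Icc_subset_Icc_right (min_le_right n (N - 1))) fun k _ _ => ?_
    rw [hcE]
    positivity
  constructor
  · rw [hSmin, hVarT]
    exact mul_le_mul_of_nonneg_left hle (by positivity)
  · intro hn2
    rw [hSmin, hVarT, min_eq_right hn2]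
end

section
/- Let X be the sum of ν i.i.d. Geometric(θ) random variables (so X is negative binomial with parameters ν and θ, 0 < θ < 1), and let T_ν(X) = ∑_{j=0}^{X−1} 1/(ν+j) (with T_ν(0) = 0). Then Var T_ν(X) = ∑_{k=1}^∞ (1−θ)^k / (k² C(ν+k−1, k)), where C(n,k) is the binomial coefficient. -/
open Finset

namespace VarUMVUE

noncomputable def cc (ν x : ℕ) : ℝ := ((ν + x - 1).choose x : ℝ)
noncomputable def ee (n : ℕ) : ℝ := 1 / (n : ℝ)
noncomputable def TT (ν x : ℕ) : ℝ := ∑ j ∈ Finset.range x, 1 / ((ν : ℝ) + j)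
noncomputable def rr (ν n : ℕ) : ℝ := 1 / ((n : ℝ) ^ 2 * cc ν n)
noncomputable def aa (n : ℕ) : ℝ := ∑ p ∈ Finset.HasAntidiagonal.antidiagonal n, ee p.1 * ee p.2
noncomputable def ss (ν n : ℕ) : ℝ := aa n + rr ν n
noncomputable def bb (ν n : ℕ) : ℝ := 1 / ((n : ℝ) * cc ν n)
noncomputable def HH (n : ℕ) : ℝ := ∑ k ∈ Finset.range n, ee k
noncomputable def dd (ν i : ℕ) : ℝ := ((ν + i - 2).choose i : ℝ)

lemma cc_zero (ν : ℕ) : cc ν 0 = 1 := by simp [cc]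

lemma cc_pos (ν : ℕ) (hν : 1 ≤ ν) (x : ℕ) : 0 < cc ν x := by
  have : x ≤ ν + x - 1 := by omega
  exact_mod_cast Nat.cast_pos.2 (Nat.choose_pos this)

lemma cc_one_le (ν : ℕ) (hν : 1 ≤ ν) (x : ℕ) : 1 ≤ cc ν x := by
  have : x ≤ ν + x - 1 := by omega
  have h := Nat.choose_pos this
  rw [cc]
  exact_mod_cast h

lemma cc_rec (ν : ℕ) (hν : 1 ≤ ν) (x : ℕ) :
    ((x : ℝ) + 1) * cc ν (x + 1) = ((ν : ℝ) + x) * cc ν x := by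
  have h1 : ν + (x + 1) - 1 = (ν + x - 1) + 1 := by omega
  have h2 := Nat.add_one_mul_choose_eq (ν + x - 1) x
  have h3 : Nat.succ (ν + x - 1) = ν + x := by omega
  rw [cc, cc, h1]
  have : (ν + x) * (ν + x - 1).choose x = (ν + x - 1 + 1).choose (x + 1) * (x + 1) := by
    rw [← h3]; exact_mod_cast h2
  have := congrArg (fun n : ℕ => (n : ℝ)) this
  push_cast at this ⊢
  have h4 : ((ν + x : ℕ) : ℝ) = (ν : ℝ) + x := by push_cast; ring
  nlinarith [this]

lemma TT_succ (ν x : ℕ) : TT ν (x + 1) = TT ν x + 1 / ((ν : ℝ) + x) := by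
  simp [TT, Finset.sum_range_succ]

lemma dd_zero (ν : ℕ) : dd ν 0 = 1 := by simp [dd]

lemma cc_pascal (ν : ℕ) (hν : 1 ≤ ν) (m : ℕ) :
    cc ν (m + 1) = cc ν m + dd ν (m + 1) := by
  have h1 : ν + (m + 1) - 1 = (ν + m - 1) + 1 := by omega
  have h2 : ν + (m + 1) - 2 = ν + m - 1 := by omega
  rw [cc, cc, dd, h1, h2, Nat.choose_succ_succ']
  push_cast; ring

/-- the range-by-j form of an antidiagonal sum -/
lemma antidiag_form (F : ℕ → ℕ → ℝ) (n : ℕ) :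
    ∑ p ∈ Finset.HasAntidiagonal.antidiagonal n, F p.1 p.2 = ∑ j ∈ range (n + 1), F (n - j) j := by
  rw [Finset.Nat.sum_antidiagonal_eq_sum_range_succ F n, ← Finset.sum_range_reflect]
  refine Finset.sum_congr rfl fun j hj => ?_
  rw [Finset.mem_range] at hj
  congr 1 <;> omega

noncomputable def vv (ν x : ℕ) : ℝ := ∑ j ∈ range (x + 1), ee j * cc ν (x - j)
noncomputable def zz (ν x : ℕ) : ℝ := ∑ j ∈ range (x + 1), ss ν j * cc ν (x - j)
noncomputable def AA (ν y : ℕ) : ℝ := ∑ j ∈ range (y + 1), (j : ℝ) * ss ν j * cc ν (y - j)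
noncomputable def PP (ν y : ℕ) : ℝ := ∑ j ∈ range (y + 1), HH j * cc ν (y - j)
noncomputable def QQ (ν y : ℕ) : ℝ := ∑ j ∈ range (y + 1), bb ν j * cc ν (y - j)
noncomputable def DD (ν y : ℕ) : ℝ := ∑ j ∈ range (y + 1), dd ν (y - j) * bb ν j

lemma ee_zero : ee 0 = 0 := by simp [ee]

lemma mul_ee (j : ℕ) (hj : 1 ≤ j) : (j : ℝ) * ee j = 1 := by
  have h : (j : ℝ) ≠ 0 := Nat.cast_ne_zero.2 (by omega)
  rw [ee]; field_simp


lemma conv_step (ν : ℕ) (hν : 1 ≤ ν) (g : ℕ → ℝ) (x : ℕ) :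
    ((x : ℝ) + 1) * (∑ j ∈ range (x + 2), g j * cc ν (x + 1 - j)) =
      ((ν : ℝ) + x) * (∑ j ∈ range (x + 1), g j * cc ν (x - j))
      - (∑ j ∈ range (x + 1), (j : ℝ) * g j * cc ν (x - j))
      + (∑ j ∈ range (x + 2), (j : ℝ) * g j * cc ν (x + 1 - j)) := by
  have key : ∀ j ∈ range (x + 2), ((x : ℝ) + 1) * (g j * cc ν (x + 1 - j))
      = ((x + 1 - j : ℕ) : ℝ) * cc ν (x + 1 - j) * g j
        + (j : ℝ) * g j * cc ν (x + 1 - j) := by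
    intro j hj; rw [mem_range] at hj
    have hle : j ≤ x + 1 := by omega
    have hc : ((x + 1 - j : ℕ) : ℝ) = (x : ℝ) + 1 - (j : ℝ) := by
      push_cast [hle]; ring
    rw [hc]; ring
  rw [Finset.mul_sum, Finset.sum_congr rfl key, Finset.sum_add_distrib]
  congr 1
  rw [Finset.sum_range_succ]
  have hlast : ((x + 1 - (x + 1) : ℕ) : ℝ) * cc ν (x + 1 - (x + 1)) * g (x + 1) = 0 := by
    simp
  rw [hlast, add_zero, Finset.mul_sum, ← Finset.sum_sub_distrib]
  refine Finset.sum_congr rfl fun j hj => ?_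
  rw [mem_range] at hj
  have h1 : x + 1 - j = (x - j) + 1 := by omega
  have h3 : ((x - j : ℕ) : ℝ) = (x : ℝ) - j := by
    push_cast [(by omega : j ≤ x)]; ring
  have h2 := cc_rec ν hν (x - j)
  have key2 : ((x + 1 - j : ℕ) : ℝ) * cc ν (x + 1 - j)
      = ((ν : ℝ) + (x : ℝ) - j) * cc ν (x - j) := by
    rw [h1]
    have : (((x - j) + 1 : ℕ) : ℝ) = ((x - j : ℕ) : ℝ) + 1 := by push_cast; ring
    rw [this, h2, h3]; ring
  rw [key2]; ring

lemma sum_jee (ν x : ℕ) :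
    ∑ j ∈ range (x + 1), (j : ℝ) * ee j * cc ν (x - j) = ∑ m ∈ range x, cc ν m := by
  rw [Finset.sum_range_succ']
  simp only [Nat.cast_zero, ee_zero, zero_mul, mul_zero, zero_mul, add_zero]
  rw [← Finset.sum_range_reflect (fun m => cc ν m) x]
  refine Finset.sum_congr rfl fun i hi => ?_
  rw [mem_range] at hi
  rw [mul_ee (i + 1) (by omega)]
  have : x - (i + 1) = x - 1 - i := by omega
  rw [this, one_mul]

lemma stepV (ν : ℕ) (hν : 1 ≤ ν) (x : ℕ) :
    ((x : ℝ) + 1) * vv ν (x + 1) = ((ν : ℝ) + x) * vv ν x + cc ν x := by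
  have h := conv_step ν hν ee x
  show ((x : ℝ) + 1) * (∑ j ∈ range (x + 1 + 1), ee j * cc ν (x + 1 - j)) = _
  rw [show x + 1 + 1 = x + 2 from rfl, h, sum_jee]
  have h2 := sum_jee ν (x + 1)
  rw [show (x + 1) + 1 = x + 2 from rfl] at h2
  rw [h2, Finset.sum_range_succ (fun m => cc ν m) x, vv]
  ring

lemma stepZ (ν : ℕ) (hν : 1 ≤ ν) (x : ℕ) :
    ((x : ℝ) + 1) * zz ν (x + 1) = ((ν : ℝ) + x) * zz ν x - AA ν x + AA ν (x + 1) := by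
  have h := conv_step ν hν (ss ν) x
  show ((x : ℝ) + 1) * (∑ j ∈ range (x + 1 + 1), ss ν j * cc ν (x + 1 - j)) = _
  rw [show x + 1 + 1 = x + 2 from rfl, h]
  rfl

lemma stepU (ν : ℕ) (hν : 1 ≤ ν) (x : ℕ) :
    ((x : ℝ) + 1) * (cc ν (x + 1) * TT ν (x + 1))
      = ((ν : ℝ) + x) * (cc ν x * TT ν x) + cc ν x := by
  have hpos : (0 : ℝ) < (ν : ℝ) + x := by positivity
  rw [TT_succ, ← mul_assoc, cc_rec ν hν x]
  field_simp

lemma idA (ν : ℕ) (hν : 1 ≤ ν) : ∀ x, vv ν x = cc ν x * TT ν x := by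
  intro x
  induction x with
  | zero => simp [vv, TT, ee]
  | succ x ih =>
    have h1 := stepV ν hν x
    have h2 := stepU ν hν x
    rw [ih] at h1
    have hx : ((x : ℝ) + 1) ≠ 0 := by positivity
    exact mul_left_cancel₀ hx (h1.trans h2.symm)


lemma mul_aa (n : ℕ) : (n : ℝ) * aa n = 2 * HH n := by
  rw [aa, antidiag_form (fun i j => ee i * ee j) n, Finset.mul_sum]
  have key : ∀ j ∈ range (n + 1), (n : ℝ) * (ee (n - j) * ee j)
      = ((n - j : ℕ) : ℝ) * ee (n - j) * ee j + ee (n - j) * ((j : ℝ) * ee j) := by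
    intro j hj; rw [mem_range] at hj
    have hc : ((n - j : ℕ) : ℝ) = (n : ℝ) - j := by push_cast [(by omega : j ≤ n)]; ring
    rw [hc]; ring
  rw [Finset.sum_congr rfl key, Finset.sum_add_distrib]
  have e1 : ∑ j ∈ range (n + 1), ((n - j : ℕ) : ℝ) * ee (n - j) * ee j = HH n := by
    rw [Finset.sum_range_succ]
    simp only [Nat.sub_self, Nat.cast_zero, zero_mul, add_zero]
    rw [HH]
    refine Finset.sum_congr rfl fun j hj => ?_
    rw [mem_range] at hj
    rw [mul_ee (n - j) (by omega), one_mul]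
  have e2 : ∑ j ∈ range (n + 1), ee (n - j) * ((j : ℝ) * ee j) = HH n := by
    rw [Finset.sum_range_succ']
    simp only [Nat.cast_zero, ee_zero, zero_mul, mul_zero, add_zero]
    rw [HH, ← Finset.sum_range_reflect (fun m => ee m) n]
    refine Finset.sum_congr rfl fun j hj => ?_
    rw [mem_range] at hj
    rw [mul_ee (j + 1) (by omega), mul_one]
    congr 1; omega
  rw [e1, e2]; ring

lemma mul_rr (ν : ℕ) (hν : 1 ≤ ν) (n : ℕ) : (n : ℝ) * rr ν n = bb ν n := by
  rcases Nat.eq_zero_or_pos n with h | h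
  · subst h; simp [rr, bb]
  · have hn : (n : ℝ) ≠ 0 := Nat.cast_ne_zero.2 (by omega)
    have hc : cc ν n ≠ 0 := ne_of_gt (cc_pos ν hν n)
    rw [rr, bb]
    field_simp

lemma mul_ss (ν : ℕ) (hν : 1 ≤ ν) (n : ℕ) :
    (n : ℝ) * ss ν n = 2 * HH n + bb ν n := by
  rw [ss, mul_add, mul_aa, mul_rr ν hν]

lemma AA_split (ν : ℕ) (hν : 1 ≤ ν) (y : ℕ) : AA ν y = 2 * PP ν y + QQ ν y := by
  rw [AA, PP, QQ, Finset.mul_sum, ← Finset.sum_add_distrib]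
  refine Finset.sum_congr rfl fun j hj => ?_
  rw [mul_ss ν hν]; ring

lemma PP_form (ν y : ℕ) :
    PP ν y = ∑ k ∈ range (y + 1), ee k * (∑ m ∈ range (y - k), cc ν m) := by
  rw [PP]
  have expand : ∀ j ∈ range (y + 1), HH j * cc ν (y - j)
      = ∑ k ∈ range j, ee k * cc ν (y - j) := by
    intro j _; rw [HH, Finset.sum_mul]
  rw [Finset.sum_congr rfl expand]
  rw [Finset.sum_comm' (s := range (y + 1)) (t := fun j => range j)
    (t' := range (y + 1)) (s' := fun k => Finset.Ico (k + 1) (y + 1))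
    (h := by intro j k; simp only [mem_range, Finset.mem_Ico]; omega)]
  refine Finset.sum_congr rfl fun k hk => ?_
  rw [mem_range] at hk
  rw [Finset.mul_sum, Finset.sum_Ico_eq_sum_range]
  have : y + 1 - (k + 1) = y - k := by omega
  rw [this, ← Finset.sum_range_reflect (fun m => ee k * cc ν m) (y - k)]
  refine Finset.sum_congr rfl fun i hi => ?_
  rw [mem_range] at hi
  congr 2
  omega

lemma PP_diff (ν x : ℕ) : PP ν (x + 1) = PP ν x + vv ν x := by
  rw [PP_form, PP_form, vv]
  rw [Finset.sum_range_succ (fun k => ee k * (∑ m ∈ range (x + 1 - k), cc ν m)) (x + 1)]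
  simp only [Nat.sub_self, Finset.range_zero, Finset.sum_empty, mul_zero, add_zero]
  rw [← Finset.sum_add_distrib]
  refine Finset.sum_congr rfl fun k hk => ?_
  rw [mem_range] at hk
  have : x + 1 - k = (x - k) + 1 := by omega
  rw [this, Finset.sum_range_succ, mul_add]

lemma QQ_diff (ν : ℕ) (hν : 1 ≤ ν) (x : ℕ) : QQ ν (x + 1) = QQ ν x + DD ν (x + 1) := by
  rw [QQ, QQ, DD]
  rw [Finset.sum_range_succ (fun j => bb ν j * cc ν (x + 1 - j)) (x + 1),
      Finset.sum_range_succ (fun j => dd ν (x + 1 - j) * bb ν j) (x + 1)]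
  simp only [Nat.sub_self, cc_zero, dd_zero, mul_one, one_mul]
  have key : ∑ j ∈ range (x + 1), bb ν j * cc ν (x + 1 - j)
      = ∑ j ∈ range (x + 1), (bb ν j * cc ν (x - j) + dd ν (x + 1 - j) * bb ν j) := by
    refine Finset.sum_congr rfl fun j hj => ?_
    rw [mem_range] at hj
    have h1 : x + 1 - j = (x - j) + 1 := by omega
    rw [h1, cc_pascal ν hν (x - j)]
    rw [← h1]
    ring
  rw [key, Finset.sum_add_distrib]
  ring

lemma star (ν : ℕ) (hν : 1 ≤ ν) (i m : ℕ) (hi : 1 ≤ i) :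
    (ν + m + i) * Nat.choose (ν + i - 2) i + (m + 1) * Nat.choose (ν + i - 2) (ν - 1)
      = (ν + m) * Nat.choose (ν + i - 1) (ν - 1) := by
  match ν, hν with
  | 1, _ =>
    have h0 : Nat.choose (1 + i - 2) i = 0 :=
      Nat.choose_eq_zero_of_lt (by omega)
    simp only [h0, Nat.mul_zero, Nat.zero_add]
    have h1 : (1 : ℕ) - 1 = 0 := rfl
    simp only [h1, Nat.choose_zero_right, Nat.mul_one]
    omega
  | (ν' + 2), _ =>
    have e1 : ν' + 2 + i - 2 = ν' + i := by omega
    have e2 : ν' + 2 + i - 1 = ν' + i + 1 := by omega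
    have e3 : ν' + 2 - 1 = ν' + 1 := by omega
    rw [e1, e2, e3]
    have hsym : (ν' + i).choose i = (ν' + i).choose ν' := by
      have := Nat.choose_symm (by omega : i ≤ ν' + i)
      rw [show ν' + i - i = ν' by omega] at this
      exact this.symm
    have hpas : (ν' + i + 1).choose (ν' + 1) = (ν' + i).choose ν' + (ν' + i).choose (ν' + 1) :=
      Nat.choose_succ_succ' (ν' + i) ν'
    have hrt : (ν' + i).choose (ν' + 1) * (ν' + 1) = (ν' + i).choose ν' * i := by
      have := Nat.choose_succ_right_eq (ν' + i) ν'
      rwa [show ν' + i - ν' = i by omega] at this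
    rw [hsym, hpas]
    zify at hrt ⊢
    linear_combination -hrt

lemma DD_eval (ν : ℕ) (hν : 1 ≤ ν) (x : ℕ) :
    DD ν (x + 1) = cc ν x / ((ν : ℝ) + x) := by
  have hK : (0 : ℝ) < (ν : ℝ) + x := by positivity
  -- partial sums with remainder
  have partial_sum : ∀ m, m ≤ x →
      ∑ j ∈ range (m + 1), dd ν (x + 1 - j) * bb ν j
        = cc ν x / ((ν : ℝ) + x)
          - ((ν + x - m - 1).choose (ν - 1) : ℝ) / (((ν : ℝ) + x) * cc ν m) := by
    intro m hm
    induction m with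
    | zero =>
      rw [show (0 : ℕ) + 1 = 1 from rfl, Finset.sum_range_one,
        (by simp [bb] : bb ν 0 = (0 : ℝ)), mul_zero]
      rw [show ν + x - 0 - 1 = ν + x - 1 by omega, cc_zero, mul_one]
      have hcc : ((ν + x - 1).choose (ν - 1) : ℝ) = cc ν x := by
        rw [cc]
        congr 1
        have h := Nat.choose_symm (by omega : x ≤ ν + x - 1)
        rw [show ν + x - 1 - x = ν - 1 by omega] at h
        exact h
      rw [hcc, sub_self]
    | succ m ih =>
      have hm' : m ≤ x := by omega
      rw [Finset.sum_range_succ, ih hm']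
      set i := x - m with hidef
      have hi1 : 1 ≤ i := by omega
      have hstar := star ν hν i m hi1
      have hccm := cc_pos ν hν m
      have hccm1 := cc_pos ν hν (m + 1)
      have hrec := cc_rec ν hν m
      -- cast star to ℝ
      have hstarR : ((ν : ℝ) + m + i) * ((ν + i - 2).choose i : ℝ)
          + ((m : ℝ) + 1) * ((ν + i - 2).choose (ν - 1) : ℝ)
          = ((ν : ℝ) + m) * ((ν + i - 1).choose (ν - 1) : ℝ) := by
        exact_mod_cast congrArg (fun t : ℕ => (t : ℝ)) hstar
      have hx_eq : (x : ℝ) = (m : ℝ) + i := by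
        have : x = m + i := by omega
        exact_mod_cast congrArg (fun t : ℕ => (t : ℝ)) this
      have e1 : x + 1 - (m + 1) = i := by omega
      have e2 : ν + x - m - 1 = ν + i - 1 := by omega
      have e3 : ν + x - (m + 1) - 1 = ν + i - 2 := by omega
      rw [e1, e2, e3, dd, bb]
      have hKne : ((ν : ℝ) + x) ≠ 0 := ne_of_gt hK
      have hcm : cc ν m ≠ 0 := ne_of_gt hccm
      have hcm1 : cc ν (m + 1) ≠ 0 := ne_of_gt hccm1
      have hcast : ((m + 1 : ℕ) : ℝ) = (m : ℝ) + 1 := by push_cast; ring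
      have key : ((ν + i - 2).choose i : ℝ) * (1 / (((m : ℝ) + 1) * cc ν (m + 1)))
          = ((ν + i - 1).choose (ν - 1) : ℝ) / (((ν : ℝ) + x) * cc ν m)
            - ((ν + i - 2).choose (ν - 1) : ℝ) / (((ν : ℝ) + x) * cc ν (m + 1)) := by
        rw [mul_one_div, hrec]
        rw [div_sub_div _ _ (mul_ne_zero hKne hcm) (mul_ne_zero hKne hcm1),
          div_eq_div_iff (by positivity) (by positivity)]
        rw [hx_eq]
        linear_combination
          (((ν : ℝ) + m + i) * cc ν m * cc ν (m + 1)) * hstarR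
          - (((ν : ℝ) + m + i) * ((ν + i - 2).choose (ν - 1) : ℝ) * cc ν m) * hrec
      rw [hcast, key]
      ring
  have last := partial_sum x le_rfl
  rw [DD, Finset.sum_range_succ, last]
  have e4 : x + 1 - (x + 1) = 0 := by omega
  have e5 : ν + x - x - 1 = ν - 1 := by omega
  rw [e4, e5, dd_zero, one_mul, bb]
  have hrec := cc_rec ν hν x
  have hcast : ((x + 1 : ℕ) : ℝ) = (x : ℝ) + 1 := by push_cast; ring
  rw [hcast, hrec, Nat.choose_self, Nat.cast_one]
  ring


lemma stepW (ν : ℕ) (hν : 1 ≤ ν) (x : ℕ) :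
    ((x : ℝ) + 1) * (cc ν (x + 1) * TT ν (x + 1) ^ 2)
      = ((ν : ℝ) + x) * (cc ν x * TT ν x ^ 2) + 2 * (cc ν x * TT ν x)
        + cc ν x / ((ν : ℝ) + x) := by
  have hpos : (0 : ℝ) < (ν : ℝ) + x := by positivity
  rw [TT_succ, ← mul_assoc, cc_rec ν hν x]
  field_simp
  ring

lemma idB (ν : ℕ) (hν : 1 ≤ ν) : ∀ x, zz ν x = cc ν x * TT ν x ^ 2 := by
  intro x
  induction x with
  | zero =>
    show ∑ j ∈ range 1, ss ν j * cc ν (0 - j) = _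
    rw [Finset.sum_range_one]
    have hss0 : ss ν 0 = 0 := by
      simp [ss, aa, rr, ee, Finset.Nat.antidiagonal_zero]
    rw [hss0, zero_mul]
    simp [TT]
  | succ x ih =>
    have h1 := stepZ ν hν x
    rw [AA_split ν hν x, AA_split ν hν (x + 1), PP_diff, QQ_diff ν hν, DD_eval ν hν,
      idA ν hν x, ih] at h1
    have h2 := stepW ν hν x
    have hx : ((x : ℝ) + 1) ≠ 0 := by positivity
    refine mul_left_cancel₀ hx (h1.trans ?_)
    rw [h2]
    ring


section Analysis

variable {ν : ℕ} {q : ℝ}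

lemma norm_q_lt (hq0 : 0 < q) (hq1 : q < 1) : ‖q‖ < 1 := by
  rw [Real.norm_eq_abs, abs_of_pos hq0]; exact hq1

lemma cc_eq_choose (hν : 1 ≤ ν) (x : ℕ) :
    cc ν x = (((x + (ν - 1)).choose (ν - 1) : ℕ) : ℝ) := by
  rw [cc]
  congr 1
  have h := Nat.choose_symm (by omega : ν - 1 ≤ x + (ν - 1))
  rw [show x + (ν - 1) - (ν - 1) = x by omega] at h
  rw [show ν + x - 1 = x + (ν - 1) by omega]
  exact h

lemma summable_cc (hν : 1 ≤ ν) (hq0 : 0 < q) (hq1 : q < 1) :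
    Summable (fun x => cc ν x * q ^ x) := by
  have h := summable_choose_mul_geometric_of_norm_lt_one (R := ℝ) (ν - 1)
    (norm_q_lt hq0 hq1)
  refine h.congr fun x => ?_
  rw [cc_eq_choose hν]

lemma tsum_cc (hν : 1 ≤ ν) (hq0 : 0 < q) (hq1 : q < 1) :
    ∑' x : ℕ, cc ν x * q ^ x = 1 / (1 - q) ^ ν := by
  have h := tsum_choose_mul_geometric_of_norm_lt_one (𝕜 := ℝ) (ν - 1)
    (norm_q_lt hq0 hq1)
  rw [show ν - 1 + 1 = ν by omega] at h
  rw [← h]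
  exact tsum_congr fun x => by rw [cc_eq_choose hν]

lemma summable_pow_succ (d : ℕ) (hq0 : 0 < q) (hq1 : q < 1) :
    Summable (fun x : ℕ => ((x : ℝ) + 1) ^ d * q ^ x) := by
  have h0 : Summable (fun n : ℕ => (n : ℝ) ^ d * q ^ n) :=
    summable_pow_mul_geometric_of_norm_lt_one d (norm_q_lt hq0 hq1)
  have h1 : Summable (fun n : ℕ => ((n + 1 : ℕ) : ℝ) ^ d * q ^ (n + 1)) :=
    (summable_nat_add_iff 1).2 h0
  have h2 := h1.mul_left (1 / q)
  refine h2.congr fun n => ?_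
  have hqne : q ≠ 0 := ne_of_gt hq0
  push_cast
  field_simp
  ring

lemma TT_nonneg (ν x : ℕ) : 0 ≤ TT ν x := by
  apply Finset.sum_nonneg; intro j _; positivity

lemma TT_le (hν : 1 ≤ ν) (x : ℕ) : TT ν x ≤ (x : ℝ) := by
  calc TT ν x ≤ ∑ j ∈ Finset.range x, 1 := by
        apply Finset.sum_le_sum; intro j _
        rw [div_le_one (by positivity)]
        have : (1 : ℝ) ≤ (ν : ℝ) := by exact_mod_cast hν
        have : (0 : ℝ) ≤ (j : ℝ) := by positivity
        linarith
    _ = (x : ℝ) := by simp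

lemma cc_le (hν : 1 ≤ ν) (x : ℕ) :
    cc ν x ≤ ((ν : ℝ) + 1) ^ (ν - 1) * ((x : ℝ) + 1) ^ (ν - 1) := by
  rw [cc_eq_choose hν]
  have h1 : (x + (ν - 1)).choose (ν - 1) ≤ (x + (ν - 1)) ^ (ν - 1) :=
    Nat.choose_le_pow _ _
  have hle : x + (ν - 1) ≤ (x + 1) * (ν + 1) := by
    obtain ⟨ν', rfl⟩ := Nat.exists_eq_add_of_le hν
    have : (x + 1) * (1 + ν' + 1) = x + x * ν' + x + ν' + 2 := by ring
    omega
  have h2 : (x + (ν - 1)) ^ (ν - 1) ≤ ((x + 1) * (ν + 1)) ^ (ν - 1) :=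
    Nat.pow_le_pow_left hle _
  have h3 : (x + (ν - 1)).choose (ν - 1) ≤ ((x + 1) * (ν + 1)) ^ (ν - 1) := le_trans h1 h2
  have h4 : (((x + (ν - 1)).choose (ν - 1) : ℕ) : ℝ)
      ≤ ((((x + 1) * (ν + 1)) ^ (ν - 1) : ℕ) : ℝ) := by exact_mod_cast h3
  refine h4.trans ?_
  push_cast
  rw [mul_pow, mul_comm]

lemma summable_cc_mul_pow (hν : 1 ≤ ν) (d : ℕ) (hq0 : 0 < q) (hq1 : q < 1) :
    Summable (fun x : ℕ => cc ν x * ((x : ℝ) + 1) ^ d * q ^ x) := by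
  have hbig := (summable_pow_succ (ν - 1 + d) hq0 hq1).mul_left (((ν : ℝ) + 1) ^ (ν - 1))
  refine Summable.of_nonneg_of_le (fun x => ?_) (fun x => ?_) hbig
  · have := cc_pos ν hν x; positivity
  · have h := cc_le hν x
    calc cc ν x * ((x : ℝ) + 1) ^ d * q ^ x
        ≤ (((ν : ℝ) + 1) ^ (ν - 1) * ((x : ℝ) + 1) ^ (ν - 1)) * ((x : ℝ) + 1) ^ d * q ^ x := by
          have hq : (0:ℝ) ≤ q ^ x := by positivity
          have hp : (0:ℝ) ≤ ((x:ℝ)+1)^d := by positivity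
          nlinarith [cc_pos ν hν x, h, mul_nonneg hp hq]
      _ = ((ν : ℝ) + 1) ^ (ν - 1) * (((x : ℝ) + 1) ^ (ν - 1 + d) * q ^ x) := by
          rw [pow_add]; ring


lemma norm_eq_of_nonneg {f : ℕ → ℝ} (hf : ∀ x, 0 ≤ f x) :
    (fun x => ‖f x‖) = f :=
  funext fun x => by rw [Real.norm_eq_abs, abs_of_nonneg (hf x)]

lemma summable_norm_cc (hν : 1 ≤ ν) (hq0 : 0 < q) (hq1 : q < 1) :
    Summable (fun x => ‖cc ν x * q ^ x‖) := by
  rw [norm_eq_of_nonneg (fun x => by have := cc_pos ν hν x; positivity)]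
  exact summable_cc hν hq0 hq1

lemma ee_nonneg (n : ℕ) : 0 ≤ ee n := by rw [ee]; positivity

lemma ee_le_one (n : ℕ) : ee n ≤ 1 := by
  rw [ee]
  rcases Nat.eq_zero_or_pos n with h | h
  · subst h; norm_num
  · rw [div_le_one (by exact_mod_cast h)]
    exact_mod_cast h

lemma summable_norm_ee (hq0 : 0 < q) (hq1 : q < 1) :
    Summable (fun k => ‖ee k * q ^ k‖) := by
  rw [norm_eq_of_nonneg (fun k => by have := ee_nonneg k; positivity)]
  refine Summable.of_nonneg_of_le (fun k => by have := ee_nonneg k; positivity)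
    (fun k => ?_) (summable_geometric_of_lt_one hq0.le hq1)
  have h1 := ee_le_one k
  have h2 : (0:ℝ) ≤ q ^ k := by positivity
  nlinarith [ee_nonneg k]

lemma summable_norm_ccT (hν : 1 ≤ ν) (hq0 : 0 < q) (hq1 : q < 1) :
    Summable (fun x => ‖cc ν x * TT ν x * q ^ x‖) := by
  rw [norm_eq_of_nonneg (fun x => by
    have := cc_pos ν hν x; have := TT_nonneg ν x; positivity)]
  refine Summable.of_nonneg_of_le (fun x => by
      have := cc_pos ν hν x; have := TT_nonneg ν x; positivity)
    (fun x => ?_) (summable_cc_mul_pow hν 1 hq0 hq1)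
  have h1 := TT_le hν x
  have h2 := TT_nonneg ν x
  have h3 := (cc_pos ν hν x).le
  have h4 : (0:ℝ) ≤ q ^ x := by positivity
  have h5 : TT ν x ≤ (x : ℝ) + 1 := by linarith [h1]
  calc cc ν x * TT ν x * q ^ x ≤ cc ν x * ((x:ℝ)+1) * q ^ x := by
        apply mul_le_mul_of_nonneg_right _ h4
        exact mul_le_mul_of_nonneg_left h5 h3
    _ = cc ν x * ((x:ℝ)+1) ^ 1 * q ^ x := by rw [pow_one]

lemma summable_norm_ccT2 (hν : 1 ≤ ν) (hq0 : 0 < q) (hq1 : q < 1) :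
    Summable (fun x => ‖cc ν x * TT ν x ^ 2 * q ^ x‖) := by
  rw [norm_eq_of_nonneg (fun x => by
    have := cc_pos ν hν x; have := TT_nonneg ν x; positivity)]
  refine Summable.of_nonneg_of_le (fun x => by
      have := cc_pos ν hν x; have := TT_nonneg ν x; positivity)
    (fun x => ?_) (summable_cc_mul_pow hν 2 hq0 hq1)
  have h1 := TT_le hν x
  have h2 := TT_nonneg ν x
  have h3 := (cc_pos ν hν x).le
  have h4 : (0:ℝ) ≤ q ^ x := by positivity
  have h5 : TT ν x ^ 2 ≤ ((x : ℝ) + 1) ^ 2 := by nlinarith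
  apply mul_le_mul_of_nonneg_right _ h4
  exact mul_le_mul_of_nonneg_left h5 h3

lemma aa_nonneg (n : ℕ) : 0 ≤ aa n :=
  Finset.sum_nonneg fun p _ => mul_nonneg (ee_nonneg _) (ee_nonneg _)

lemma aa_le (n : ℕ) : aa n ≤ (n : ℝ) + 1 := by
  have h : aa n ≤ ∑ _p ∈ Finset.HasAntidiagonal.antidiagonal n, (1:ℝ) := by
    apply Finset.sum_le_sum
    intro p _
    have := ee_le_one p.1; have := ee_le_one p.2
    have := ee_nonneg p.1; have := ee_nonneg p.2
    nlinarith
  rw [Finset.sum_const, Finset.Nat.card_antidiagonal] at h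
  simpa using h

lemma rr_nonneg (ν : ℕ) (hν : 1 ≤ ν) (n : ℕ) : 0 ≤ rr ν n := by
  have := (cc_pos ν hν n).le
  rw [rr]; positivity

lemma rr_le_one (ν : ℕ) (hν : 1 ≤ ν) (n : ℕ) : rr ν n ≤ 1 := by
  rw [rr]
  rcases Nat.eq_zero_or_pos n with h | h
  · subst h; simp
  · rw [div_le_one]
    · have h1 : (1:ℝ) ≤ (n:ℝ) ^ 2 := by
        have : (1:ℝ) ≤ (n:ℝ) := by exact_mod_cast h
        nlinarith
      have h2 := cc_one_le ν hν n
      nlinarith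
    · have h1 : (0:ℝ) < (n:ℝ) ^ 2 := by
        have : (0:ℝ) < (n:ℝ) := by exact_mod_cast h
        positivity
      exact mul_pos h1 (cc_pos ν hν n)

lemma summable_norm_aa (hq0 : 0 < q) (hq1 : q < 1) :
    Summable (fun n => ‖aa n * q ^ n‖) := by
  rw [norm_eq_of_nonneg (fun n => by have := aa_nonneg n; positivity)]
  refine Summable.of_nonneg_of_le (fun n => by have := aa_nonneg n; positivity)
    (fun n => ?_) (summable_pow_succ 1 hq0 hq1)
  have h4 : (0:ℝ) ≤ q ^ n := by positivity
  calc aa n * q ^ n ≤ ((n:ℝ)+1) * q ^ n :=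
        mul_le_mul_of_nonneg_right (aa_le n) h4
    _ = ((n:ℝ)+1) ^ 1 * q ^ n := by rw [pow_one]

lemma summable_norm_rr (hν : 1 ≤ ν) (hq0 : 0 < q) (hq1 : q < 1) :
    Summable (fun n => ‖rr ν n * q ^ n‖) := by
  rw [norm_eq_of_nonneg (fun n => by have := rr_nonneg ν hν n; positivity)]
  refine Summable.of_nonneg_of_le (fun n => by have := rr_nonneg ν hν n; positivity)
    (fun n => ?_) (summable_geometric_of_lt_one hq0.le hq1)
  have h4 : (0:ℝ) ≤ q ^ n := by positivity
  nlinarith [rr_le_one ν hν n, rr_nonneg ν hν n]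

lemma summable_norm_ss (hν : 1 ≤ ν) (hq0 : 0 < q) (hq1 : q < 1) :
    Summable (fun n => ‖ss ν n * q ^ n‖) := by
  have h := (summable_norm_aa hq0 hq1).add (summable_norm_rr hν hq0 hq1)
  refine Summable.of_nonneg_of_le (fun n => norm_nonneg _) (fun n => ?_) h
  rw [ss, add_mul]
  exact norm_add_le _ _

lemma vv_antidiag (ν n : ℕ) :
    ∑ p ∈ Finset.HasAntidiagonal.antidiagonal n, cc ν p.1 * ee p.2 = vv ν n := by
  rw [antidiag_form (fun i j => cc ν i * ee j) n, vv]
  exact Finset.sum_congr rfl fun j _ => mul_comm _ _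

lemma zz_antidiag (ν n : ℕ) :
    ∑ p ∈ Finset.HasAntidiagonal.antidiagonal n, cc ν p.1 * ss ν p.2 = zz ν n := by
  rw [antidiag_form (fun i j => cc ν i * ss ν j) n, zz]
  exact Finset.sum_congr rfl fun j _ => mul_comm _ _

lemma cauchy_generic (g : ℕ → ℝ) (hg : Summable (fun k => ‖g k * q ^ k‖))
    (hν : 1 ≤ ν) (hq0 : 0 < q) (hq1 : q < 1) :
    (∑' x : ℕ, cc ν x * q ^ x) * (∑' k : ℕ, g k * q ^ k)
      = ∑' n : ℕ, (∑ p ∈ Finset.HasAntidiagonal.antidiagonal n, cc ν p.1 * g p.2) * q ^ n := by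
  rw [tsum_mul_tsum_eq_tsum_sum_antidiagonal_of_summable_norm
    (summable_norm_cc hν hq0 hq1) hg]
  refine tsum_congr fun n => ?_
  rw [Finset.sum_mul]
  refine Finset.sum_congr rfl fun p hp => ?_
  rw [Finset.HasAntidiagonal.mem_antidiagonal] at hp
  rw [← hp, pow_add]
  ring

lemma cauchy_ee_ee (hq0 : 0 < q) (hq1 : q < 1) :
    (∑' k : ℕ, ee k * q ^ k) * (∑' k : ℕ, ee k * q ^ k)
      = ∑' n : ℕ, aa n * q ^ n := by
  rw [tsum_mul_tsum_eq_tsum_sum_antidiagonal_of_summable_norm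
    (summable_norm_ee hq0 hq1) (summable_norm_ee hq0 hq1)]
  refine tsum_congr fun n => ?_
  rw [aa, Finset.sum_mul]
  refine Finset.sum_congr rfl fun p hp => ?_
  rw [Finset.HasAntidiagonal.mem_antidiagonal] at hp
  rw [← hp, pow_add]
  ring

end Analysis

end VarUMVUE
/-- **Variance of the UMVUE of −log θ for the geometric sample (Application 5.1).**
If `X` is negative binomial with parameters `ν ≥ 1` and `0 < θ < 1`
(`p(x) = C(ν+x−1, x) θ^ν (1−θ)^x`) and `T_ν(x) = ∑_{j=0}^{x−1} 1/(ν+j)`, then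
`Var T_ν(X) = ∑_{k=1}^∞ (1−θ)ᵏ / (k² C(ν+k−1, k))`. -/
theorem variance_umvue_neg_log_theta
    (ν : ℕ) (hν : 1 ≤ ν) (θ : ℝ) (hθ0 : 0 < θ) (hθ1 : θ < 1) :
    (let pmf : ℕ → ℝ := fun x => ((ν + x - 1).choose x : ℝ) * θ ^ ν * (1 - θ) ^ x;
     let T : ℕ → ℝ := fun x => ∑ j ∈ Finset.range x, 1 / ((ν : ℝ) + j);
     let m : ℝ := ∑' x : ℕ, pmf x * T x;
     (∑' x : ℕ, pmf x * (T x - m) ^ 2)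
        = ∑' k : ℕ, (1 - θ) ^ (k + 1) /
            (((k + 1 : ℕ) : ℝ) ^ 2 * ((ν + k).choose (k + 1) : ℝ))) := by
  intro pmf T m
  open VarUMVUE in
  set q : ℝ := 1 - θ with hqdef
  have hq0 : 0 < q := by rw [hqdef]; linarith
  have hq1 : q < 1 := by rw [hqdef]; linarith
  have hθq : 1 - q = θ := by rw [hqdef]; ring
  have hθne : θ ≠ 0 := ne_of_gt hθ0
  have hθν : θ ^ ν ≠ 0 := pow_ne_zero _ hθne
  -- identify pmf and T
  have hpmf : ∀ x, pmf x = θ ^ ν * (cc ν x * q ^ x) := by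
    intro x
    show ((ν + x - 1).choose x : ℝ) * θ ^ ν * (1 - θ) ^ x = _
    rw [← hqdef, cc]; ring
  have hT : ∀ x, T x = TT ν x := fun x => rfl
  -- basic sums
  have hF1 : ∑' x : ℕ, cc ν x * q ^ x = 1 / θ ^ ν := by
    rw [tsum_cc hν hq0 hq1, hθq]
  have hone : θ ^ ν * (1 / θ ^ ν) = 1 := by field_simp
  -- L
  set L : ℝ := ∑' k : ℕ, ee k * q ^ k with hLdef
  -- the mean
  have hm : m = L := by
    show (∑' x : ℕ, pmf x * T x) = L
    have e1 : ∀ x, pmf x * T x = θ ^ ν * (cc ν x * TT ν x * q ^ x) := by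
      intro x; rw [hpmf x, hT x]; ring
    rw [tsum_congr e1, tsum_mul_left]
    have e2 : (∑' x : ℕ, cc ν x * TT ν x * q ^ x) = (1 / θ ^ ν) * L := by
      have hc := cauchy_generic (ν := ν) ee (summable_norm_ee hq0 hq1) hν hq0 hq1
      rw [hF1] at hc
      rw [hLdef, hc]
      refine tsum_congr fun n => ?_
      rw [vv_antidiag, idA ν hν n]
    rw [e2, ← mul_assoc, hone, one_mul]
  -- the second moment
  set R : ℝ := ∑' n : ℕ, rr ν n * q ^ n with hRdef
  have hE2 : (∑' x : ℕ, pmf x * T x ^ 2) = L ^ 2 + R := by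
    have e1 : ∀ x, pmf x * T x ^ 2 = θ ^ ν * (cc ν x * TT ν x ^ 2 * q ^ x) := by
      intro x; rw [hpmf x, hT x]; ring
    rw [tsum_congr e1, tsum_mul_left]
    have hc := cauchy_generic (ν := ν) (ss ν) (summable_norm_ss hν hq0 hq1) hν hq0 hq1
    rw [hF1] at hc
    have e2 : (∑' n : ℕ, (∑ p ∈ Finset.HasAntidiagonal.antidiagonal n, cc ν p.1 * ss ν p.2) * q ^ n)
        = ∑' x : ℕ, cc ν x * TT ν x ^ 2 * q ^ x := by
      refine tsum_congr fun n => ?_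
      rw [zz_antidiag, idB ν hν n]
    rw [e2] at hc
    rw [← hc, ← mul_assoc, hone, one_mul]
    have e3 : (∑' k : ℕ, ss ν k * q ^ k) = (∑' n : ℕ, aa n * q ^ n) + R := by
      rw [hRdef, ← Summable.tsum_add (summable_norm_aa hq0 hq1).of_norm
        ((summable_norm_rr hν hq0 hq1).of_norm)]
      refine tsum_congr fun n => ?_
      rw [ss]; ring
    rw [e3, ← cauchy_ee_ee hq0 hq1, ← hLdef]
    ring
  -- total mass
  have hmass : (∑' x : ℕ, pmf x) = 1 := by
    rw [tsum_congr hpmf, tsum_mul_left, hF1, hone]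
  -- summability of pmf-weighted series
  have Spmf : Summable pmf := by
    refine Summable.congr (((summable_cc hν hq0 hq1).mul_left (θ ^ ν))) fun x => ?_
    rw [hpmf x]
  have SpmfT : Summable (fun x => pmf x * T x) := by
    refine Summable.congr (((summable_norm_ccT hν hq0 hq1).of_norm.mul_left (θ ^ ν)))
      fun x => ?_
    rw [hpmf x, hT x]; ring
  have SpmfT2 : Summable (fun x => pmf x * T x ^ 2) := by
    refine Summable.congr (((summable_norm_ccT2 hν hq0 hq1).of_norm.mul_left (θ ^ ν)))
      fun x => ?_
    rw [hpmf x, hT x]; ring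
  -- expand the variance
  have hvar : (∑' x : ℕ, pmf x * (T x - m) ^ 2)
      = (∑' x : ℕ, pmf x * T x ^ 2) - 2 * m * (∑' x : ℕ, pmf x * T x)
        + m ^ 2 * (∑' x : ℕ, pmf x) := by
    have e1 : ∀ x, pmf x * (T x - m) ^ 2
        = (pmf x * T x ^ 2 - 2 * m * (pmf x * T x)) + m ^ 2 * pmf x := by
      intro x; ring
    rw [tsum_congr e1]
    rw [Summable.tsum_add (SpmfT2.sub (SpmfT.mul_left (2 * m))) (Spmf.mul_left (m ^ 2))]
    rw [Summable.tsum_sub SpmfT2 (SpmfT.mul_left (2 * m))]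
    rw [tsum_mul_left, tsum_mul_left]
  rw [hvar, hE2, hmass, hm]
  have hRfinal : L ^ 2 + R - 2 * L * L + L ^ 2 * 1 = R := by ring
  rw [show (∑' x : ℕ, pmf x * T x) = L from hm, hRfinal]
  -- identify R with the stated series
  rw [hRdef]
  rw [Summable.tsum_eq_zero_add (summable_norm_rr hν hq0 hq1).of_norm]
  rw [show rr ν 0 * q ^ 0 = 0 by simp [rr]]
  rw [zero_add]
  refine tsum_congr fun k => ?_
  rw [rr, cc]
  rw [show ν + (k + 1) - 1 = ν + k by omega]
  push_cast
  field_simp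
end

section
/- Let X be the sum of ν i.i.d. Geometric(θ) random variables. Then E[∑_{j=0}^{X−1} 1/(ν+j)] = −log θ; that is, T_ν(X) = ∑_{j=0}^{X−1} 1/(ν+j) is an unbiased estimator of −log θ. -/
open Finset

private lemma umvue_arec (ν : ℕ) (hν : 1 ≤ ν) (j : ℕ) :
    ((j : ℝ) + 1) * ((ν + (j + 1) - 1).choose (j + 1) : ℝ)
      = ((ν : ℝ) + j) * ((ν + j - 1).choose j : ℝ) := by
  have h3 : ν + (j + 1) - 1 = ν + j := by omega
  have h : (ν + j) * (ν + j - 1).choose j = (ν + j).choose (j + 1) * (j + 1) := by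
    have e : ν + j - 1 + 1 = ν + j := by omega
    have := Nat.add_one_mul_choose_eq (ν + j - 1) j
    rw [e] at this
    simpa [Nat.succ_eq_add_one] using this
  rw [h3]
  have hc := congrArg (Nat.cast : ℕ → ℝ) h
  push_cast at hc
  linarith [hc]

private lemma umvue_key (ν : ℕ) (hν : 1 ≤ ν) : ∀ x : ℕ,
    ((ν + x - 1).choose x : ℝ) * ∑ j ∈ Finset.range x, 1 / ((ν : ℝ) + j)
      = ∑ i ∈ Finset.range x, ((ν + i - 1).choose i : ℝ) / ((x : ℝ) - i) := by
  intro x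
  induction x with
  | zero => simp
  | succ x ih =>
    set a : ℕ → ℝ := fun i => ((ν + i - 1).choose i : ℝ) with ha
    have hx1 : ((x : ℝ) + 1) ≠ 0 := by positivity
    have hνx : ((ν : ℝ) + x) ≠ 0 := by positivity
    apply mul_left_cancel₀ hx1
    have lhs_eq : ((x : ℝ) + 1) * (a (x + 1) * ∑ j ∈ Finset.range (x + 1), 1 / ((ν : ℝ) + j))
        = ((ν : ℝ) + x) * (a x * ∑ j ∈ Finset.range x, 1 / ((ν : ℝ) + j)) + a x := by
      rw [Finset.sum_range_succ, ← mul_assoc, umvue_arec ν hν x]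
      field_simp
      ring
    rw [lhs_eq, ih]
    -- now RHS side
    have rhs_eq : ((x : ℝ) + 1) * ∑ i ∈ Finset.range (x + 1), a i / (((x : ℕ) + 1 : ℝ) - i)
        = (∑ i ∈ Finset.range (x + 1), a i)
          + ∑ i ∈ Finset.range (x + 1), (i : ℝ) * (a i / (((x : ℝ) + 1) - i)) := by
      rw [Finset.mul_sum, ← Finset.sum_add_distrib]
      refine Finset.sum_congr rfl fun i hi => ?_
      have hi' : i ≤ x := by simpa [Nat.lt_succ_iff] using hi
      have hd : ((x : ℝ) + 1) - i ≠ 0 := by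
        have : (i : ℝ) ≤ x := by exact_mod_cast hi'
        nlinarith
      field_simp
      ring
    have shift : ∑ i ∈ Finset.range (x + 1), (i : ℝ) * (a i / (((x : ℝ) + 1) - i))
        = ∑ j ∈ Finset.range x, ((ν : ℝ) + j) * (a j / ((x : ℝ) - j)) := by
      rw [Finset.sum_range_succ']
      simp only [Nat.cast_zero, zero_mul, add_zero]
      refine Finset.sum_congr rfl fun j hj => ?_
      have h1 : ((x : ℝ) + 1) - ((j : ℕ) + 1 : ℝ) = (x : ℝ) - j := by ring
      have hd : (x : ℝ) - j ≠ 0 := by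
        have hj' : j < x := Finset.mem_range.mp hj
        have : (j : ℝ) < x := by exact_mod_cast hj'
        linarith
      push_cast
      rw [show (x : ℝ) + 1 - ((j : ℝ) + 1) = (x : ℝ) - j by ring]
      have := umvue_arec ν hν j
      calc ((j : ℝ) + 1) * (a (j + 1) / ((x : ℝ) - j))
          = (((j : ℝ) + 1) * a (j + 1)) / ((x : ℝ) - j) := by ring
        _ = (((ν : ℝ) + j) * a j) / ((x : ℝ) - j) := by rw [this]
        _ = ((ν : ℝ) + j) * (a j / ((x : ℝ) - j)) := by ring
    have split : ∑ j ∈ Finset.range x, ((ν : ℝ) + j) * (a j / ((x : ℝ) - j))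
        = ((ν : ℝ) + x) * (∑ j ∈ Finset.range x, a j / ((x : ℝ) - j))
          - ∑ j ∈ Finset.range x, a j := by
      rw [Finset.mul_sum, ← Finset.sum_sub_distrib]
      refine Finset.sum_congr rfl fun j hj => ?_
      have hj' : j < x := Finset.mem_range.mp hj
      have hd : (x : ℝ) - j ≠ 0 := by
        have : (j : ℝ) < x := by exact_mod_cast hj'
        linarith
      field_simp
      ring
    push_cast at rhs_eq ⊢
    rw [rhs_eq, shift, split, Finset.sum_range_succ]
    ring

/-- **Unbiasedness of `T_ν` for −log θ (Application 5.1).**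
If `X` is negative binomial with parameters `ν ≥ 1` and `0 < θ < 1`, then
`E[∑_{j=0}^{X−1} 1/(ν+j)] = −log θ`. -/
theorem umvue_neg_log_theta_unbiased
    (ν : ℕ) (hν : 1 ≤ ν) (θ : ℝ) (hθ0 : 0 < θ) (hθ1 : θ < 1) :
    (∑' x : ℕ, (((ν + x - 1).choose x : ℝ) * θ ^ ν * (1 - θ) ^ x)
        * ∑ j ∈ Finset.range x, 1 / ((ν : ℝ) + j))
      = - Real.log θ := by
  set q : ℝ := 1 - θ with hq
  have hq0 : 0 < q := by simp only [hq]; linarith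
  have hq1 : q < 1 := by simp only [hq]; linarith
  have hnorm : ‖q‖ < 1 := by rw [Real.norm_eq_abs, abs_of_pos hq0]; exact hq1
  have habs : |q| < 1 := by rw [abs_of_pos hq0]; exact hq1
  have hθq : 1 - q = θ := by simp [hq]
  set f : ℕ → ℝ := fun i => ((ν + i - 1).choose i : ℝ) * q ^ i with hfdef
  set g : ℕ → ℝ := fun m => q ^ m / m with hgdef
  have hf : HasSum f (1 / (1 - q) ^ ν) := by
    have h := hasSum_choose_mul_geometric_of_norm_lt_one (ν - 1) (r := q) hnorm
    have hν' : ν - 1 + 1 = ν := by omega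
    rw [hν'] at h
    refine h.congr_fun fun n => ?_
    have hch : (n + (ν - 1)).choose (ν - 1) = (ν + n - 1).choose n := by
      have := Nat.choose_symm (n := n + (ν - 1)) (k := ν - 1) (by omega)
      rw [show n + (ν - 1) - (ν - 1) = n by omega] at this
      rw [← this, show n + (ν - 1) = ν + n - 1 by omega]
    rw [hfdef]
    simp only [hch]
  have hg : HasSum g (-Real.log (1 - q)) := by
    have h1 := Real.hasSum_pow_div_log_of_abs_lt_one habs
    have h2 : HasSum (fun n => g (n + 1)) (-Real.log (1 - q)) := by
      refine h1.congr_fun fun n => ?_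
      rw [hgdef]
      push_cast
      ring
    have := (hasSum_nat_add_iff (f := g) 1).1 h2
    simpa [hgdef] using this
  have hfn : Summable fun i => ‖f i‖ := by
    refine (summable_congr fun i => ?_).2 hf.summable
    rw [Real.norm_eq_abs, abs_of_nonneg (by positivity)]
  have hgn : Summable fun m => ‖g m‖ := by
    refine (summable_congr fun m => ?_).2 hg.summable
    rw [Real.norm_eq_abs, abs_of_nonneg (by positivity)]
  have hC := tsum_mul_tsum_eq_tsum_sum_antidiagonal_of_summable_norm hfn hgn
  have hterm : ∀ x : ℕ,
      (((ν + x - 1).choose x : ℝ) * θ ^ ν * (1 - θ) ^ x)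
          * ∑ j ∈ Finset.range x, 1 / ((ν : ℝ) + j)
        = θ ^ ν * ∑ kl ∈ Finset.HasAntidiagonal.antidiagonal x, f kl.1 * g kl.2 := by
    intro x
    rw [Finset.Nat.sum_antidiagonal_eq_sum_range_succ (fun k l => f k * g l) x,
      Finset.sum_range_succ]
    have hg0 : g (x - x) = 0 := by simp [hgdef]
    rw [hg0, mul_zero, add_zero]
    have hL : (((ν + x - 1).choose x : ℝ) * θ ^ ν * (1 - θ) ^ x)
          * ∑ j ∈ Finset.range x, 1 / ((ν : ℝ) + j)
        = θ ^ ν * (q ^ x * (((ν + x - 1).choose x : ℝ) * ∑ j ∈ Finset.range x, 1 / ((ν : ℝ) + j))) := by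
      rw [← hq]; ring
    rw [hL]
    rw [umvue_key ν hν x]
    refine congrArg (fun t => θ ^ ν * t) ?_
    rw [Finset.mul_sum]
    refine Finset.sum_congr rfl fun i hi => ?_
    have hi' : i < x := Finset.mem_range.mp hi
    have hc : ((x - i : ℕ) : ℝ) = (x : ℝ) - i := by
      rw [Nat.cast_sub hi'.le]
    rw [hfdef, hgdef]
    simp only
    have hpow : q ^ i * q ^ (x - i) = q ^ x := by
      rw [← pow_add]; congr 1; omega
    rw [hc, ← hpow]
    ring
  calc (∑' x : ℕ, (((ν + x - 1).choose x : ℝ) * θ ^ ν * (1 - θ) ^ x)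
        * ∑ j ∈ Finset.range x, 1 / ((ν : ℝ) + j))
      = ∑' x : ℕ, θ ^ ν * ∑ kl ∈ Finset.HasAntidiagonal.antidiagonal x, f kl.1 * g kl.2 := by
        exact tsum_congr hterm
    _ = θ ^ ν * ∑' x : ℕ, ∑ kl ∈ Finset.HasAntidiagonal.antidiagonal x, f kl.1 * g kl.2 := tsum_mul_left
    _ = θ ^ ν * ((∑' n, f n) * ∑' n, g n) := by rw [hC]
    _ = θ ^ ν * (1 / (1 - q) ^ ν * (-Real.log (1 - q))) := by
        rw [hf.tsum_eq, hg.tsum_eq]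
    _ = - Real.log θ := by
        rw [hθq]
        field_simp
end

section
/- For every positive integer ν, ∑_{k=1}^∞ 1 / (k² C(ν+k−1, k)) = ∑_{k=ν}^∞ 1/k² = π²/6 − ∑_{k=1}^{ν−1} 1/k². -/
open Filter Finset

lemma chpos (n k : ℕ) (h : k ≤ n) : (0:ℝ) < (n.choose k : ℝ) := by
  exact_mod_cast Nat.choose_pos h

lemma nat1 (ν k : ℕ) : (ν+k).choose (k+1) * (ν+k+1) = (ν+k+1).choose (k+1) * ν := by
  have := Nat.choose_mul_succ_eq (ν+k) (k+1)
  simpa [Nat.add_sub_cancel_left, Nat.add_assoc, Nat.add_comm, Nat.add_left_comm] using this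

lemma nat2 (ν k : ℕ) : (ν+k+1) * (ν+k).choose k = (ν+k+1).choose (k+1) * (k+1) :=
  Nat.add_one_mul_choose_eq (ν+k) k

lemma key1_s16 (ν k : ℕ) (hν : 1 ≤ ν) :
    1 / (((k + 1 : ℕ) : ℝ) ^ 2 * ((ν + k).choose (k + 1) : ℝ))
      = 1 / (((k + 1 : ℕ) : ℝ) ^ 2 * (((ν+1) + k).choose (k + 1) : ℝ))
        + (1 / ν) * (1 / ((((k+1):ℕ) : ℝ) * ((ν + k + 1).choose (k + 1) : ℝ))) := by
  have ha : (0:ℝ) < ((ν+k).choose (k+1) : ℝ) := chpos _ _ (by omega)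
  have hb : (0:ℝ) < ((ν+k+1).choose (k+1) : ℝ) := chpos _ _ (by omega)
  have hn : (0:ℝ) < (ν:ℝ) := by exact_mod_cast hν
  have h1 : ((ν+k).choose (k+1) : ℝ) * ((ν:ℝ)+k+1) = ((ν+k+1).choose (k+1) : ℝ) * ν := by
    exact_mod_cast congrArg (Nat.cast (R := ℝ)) (nat1 ν k)
  have hrw : ((ν+1) + k).choose (k+1) = (ν + k + 1).choose (k+1) := by ring_nf
  rw [hrw]
  push_cast
  field_simp
  linear_combination (-1 : ℝ) * h1

lemma key2 (ν k : ℕ) (hν : 1 ≤ ν) :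
    1 / ((((k+1):ℕ) : ℝ) * ((ν + k + 1).choose (k + 1) : ℝ))
      = 1 / ((ν:ℝ) * ((ν + k).choose k : ℝ)) - 1 / ((ν:ℝ) * ((ν + k + 1).choose (k+1) : ℝ)) := by
  have ha : (0:ℝ) < ((ν+k).choose k : ℝ) := chpos _ _ (by omega)
  have hb : (0:ℝ) < ((ν+k+1).choose (k+1) : ℝ) := chpos _ _ (by omega)
  have hn : (0:ℝ) < (ν:ℝ) := by exact_mod_cast hν
  have h2 : ((ν:ℝ)+k+1) * ((ν+k).choose k : ℝ) = ((ν+k+1).choose (k+1) : ℝ) * ((k:ℝ)+1) := by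
    exact_mod_cast congrArg (Nat.cast (R := ℝ)) (nat2 ν k)
  push_cast
  field_simp
  linear_combination h2

lemma hasSum_aux (ν : ℕ) (hν : 1 ≤ ν) :
    HasSum (fun k : ℕ => 1 / ((((k+1):ℕ) : ℝ) * ((ν + k + 1).choose (k + 1) : ℝ))) (1 / ν) := by
  set d : ℕ → ℝ := fun k => 1 / ((ν:ℝ) * ((ν + k).choose k : ℝ)) with hd
  have hterm : ∀ k : ℕ, 1 / ((((k+1):ℕ) : ℝ) * ((ν + k + 1).choose (k + 1) : ℝ)) = d k - d (k+1) := by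
    intro k
    rw [key2 ν k hν]; simp [hd, Nat.add_assoc]
  have hnonneg : ∀ k : ℕ, (0:ℝ) ≤ 1 / ((((k+1):ℕ) : ℝ) * ((ν + k + 1).choose (k + 1) : ℝ)) := by
    intro k; positivity
  rw [hasSum_iff_tendsto_nat_of_nonneg hnonneg]
  have hsum : ∀ n, ∑ i ∈ range n, (1 / ((((i+1):ℕ) : ℝ) * ((ν + i + 1).choose (i + 1) : ℝ))) = d 0 - d n := by
    intro n
    rw [Finset.sum_congr rfl (fun i _ => hterm i)]
    exact Finset.sum_range_sub' d n
  simp only [hsum]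
  have hd0 : d 0 = 1 / ν := by simp [hd]
  have hdlim : Tendsto d atTop (nhds 0) := by
    have hn : (0:ℝ) < (ν:ℝ) := by exact_mod_cast hν
    have hle : ∀ n : ℕ, d n ≤ (1/(ν:ℝ)) * (1 / ((n:ℝ)+1)) := by
      intro n
      have hch : ((n:ℝ)+1) ≤ ((ν + n).choose n : ℝ) := by
        have h1 : (1 + n).choose n ≤ (ν + n).choose n := Nat.choose_le_choose n (by omega)
        have h2 : (1 + n).choose n = n + 1 := by
          rw [Nat.add_comm]; exact Nat.choose_succ_self_right n
        exact_mod_cast h2 ▸ h1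
      have hpos : (0:ℝ) < ((ν + n).choose n : ℝ) := chpos _ _ (by omega)
      rw [hd, show (1/(ν:ℝ)) * (1/((n:ℝ)+1)) = 1/((ν:ℝ)*((n:ℝ)+1)) by rw [div_mul_div_comm, one_mul]]
      apply one_div_le_one_div_of_le (by positivity)
      exact mul_le_mul_of_nonneg_left hch (le_of_lt hn)
    have hge : ∀ n : ℕ, (0:ℝ) ≤ d n := by
      intro n
      have hpos : (0:ℝ) < ((ν + n).choose n : ℝ) := chpos _ _ (by omega)
      rw [hd]; positivity
    have hlim : Tendsto (fun n : ℕ => (1/(ν:ℝ)) * (1 / ((n:ℝ)+1))) atTop (nhds 0) := by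
      simpa using tendsto_one_div_add_atTop_nhds_zero_nat.const_mul (1/(ν:ℝ))
    exact squeeze_zero hge hle hlim
  have : Tendsto (fun n => d 0 - d n) atTop (nhds (d 0 - 0)) := tendsto_const_nhds.sub hdlim
  simpa [hd0] using this

lemma summable_R (ν : ℕ) : Summable (fun k : ℕ => 1 / (((k + ν : ℕ) : ℝ) ^ 2)) := by
  have hb := Real.summable_one_div_nat_pow.mpr (show 1 < 2 by norm_num)
  have := (summable_nat_add_iff ν).2 hb
  refine this.congr fun k => ?_
  push_cast; ring_nf

lemma summable_S (ν : ℕ) (hν : 1 ≤ ν) :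
    Summable (fun k : ℕ => 1 / (((k + 1 : ℕ) : ℝ) ^ 2 * ((ν + k).choose (k + 1) : ℝ))) := by
  have h1 : Summable (fun k : ℕ => 1 / (((k+1):ℝ)) ^ 2) := by
    have hb := Real.summable_one_div_nat_pow.mpr (show 1 < 2 by norm_num)
    refine ((summable_nat_add_iff 1).2 hb).congr fun k => ?_
    push_cast; ring_nf
  refine Summable.of_nonneg_of_le (fun k => by positivity) (fun k => ?_) h1
  have hpos : (0:ℝ) < ((ν+k).choose (k+1) : ℝ) := chpos _ _ (by omega)
  have h1le : (1:ℝ) ≤ ((ν+k).choose (k+1) : ℝ) := by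
    exact_mod_cast (Nat.choose_pos (by omega : k+1 ≤ ν+k))
  apply one_div_le_one_div_of_le (by positivity)
  push_cast
  nlinarith [sq_nonneg ((k:ℝ)+1)]

lemma main_eq (ν : ℕ) (hν : 1 ≤ ν) :
    (∑' k : ℕ, 1 / (((k + 1 : ℕ) : ℝ) ^ 2 * ((ν + k).choose (k + 1) : ℝ)))
        = ∑' k : ℕ, 1 / (((k + ν : ℕ) : ℝ) ^ 2) := by
  induction ν with
  | zero => omega
  | succ n ih =>
    rcases Nat.lt_or_ge 1 (n+1) with h1 | h1
    case inr =>
      -- base case ν = 1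
      have hn0 : n = 0 := by omega
      subst hn0
      apply tsum_congr
      intro k
      have hc : (1 + k).choose (k+1) = 1 := by rw [Nat.add_comm]; exact Nat.choose_self (k+1)
      rw [hc]; push_cast; ring_nf
    case inl =>
      have hn1 : 1 ≤ n := by omega
      have IH := ih hn1
      have hnpos : (0:ℝ) < (n:ℝ) := by exact_mod_cast hn1
      have hT := hasSum_aux n hn1
      have hS1 : Summable (fun k : ℕ => 1 / (((k + 1 : ℕ) : ℝ) ^ 2 * (((n+1) + k).choose (k + 1) : ℝ))) :=
        summable_S (n+1) (by omega)
      have hcomb := hS1.hasSum.add (hT.mul_left (1/(n:ℝ)))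
      have hSn : HasSum (fun k : ℕ => 1 / (((k + 1 : ℕ) : ℝ) ^ 2 * ((n + k).choose (k + 1) : ℝ)))
          ((∑' k : ℕ, 1 / (((k + 1 : ℕ) : ℝ) ^ 2 * (((n+1) + k).choose (k + 1) : ℝ))) + 1/(n:ℝ) * (1/(n:ℝ))) := by
        exact hcomb.congr_fun fun k => key1_s16 n k hn1
      have hSeq := hSn.tsum_eq
      -- split off first term of R n
      have hRsplit : (∑' k : ℕ, 1 / (((k + n : ℕ) : ℝ) ^ 2))
          = 1/((n:ℝ))^2 + ∑' k : ℕ, 1 / (((k + (n+1) : ℕ) : ℝ) ^ 2) := by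
        rw [(summable_R n).tsum_eq_zero_add]
        congr 1
        · norm_num
        · apply tsum_congr; intro k; congr 2; push_cast; ring
      rw [IH] at hSeq
      have h2 : (1:ℝ)/(n:ℝ) * (1/(n:ℝ)) = 1/((n:ℝ))^2 := by
        rw [div_mul_div_comm, one_mul, sq]
      rw [h2] at hSeq
      linarith [hSeq, hRsplit]

/-- **Closed form for the series `∑ₖ 1/(k² C(ν+k−1,k))` (Application 5.2).**
For every positive integer `ν`,
`∑_{k=1}^∞ 1/(k² C(ν+k−1,k)) = ∑_{k=ν}^∞ 1/k² = π²/6 − ∑_{k=1}^{ν−1} 1/k²`. -/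
theorem series_inv_sq_choose (ν : ℕ) (hν : 1 ≤ ν) :
    (∑' k : ℕ, 1 / (((k + 1 : ℕ) : ℝ) ^ 2 * ((ν + k).choose (k + 1) : ℝ)))
        = ∑' k : ℕ, 1 / (((k + ν : ℕ) : ℝ) ^ 2) ∧
    (∑' k : ℕ, 1 / (((k + ν : ℕ) : ℝ) ^ 2))
        = Real.pi ^ 2 / 6 - ∑ k ∈ Finset.Icc 1 (ν - 1), 1 / ((k : ℝ) ^ 2) := by
  constructor
  · exact main_eq ν hν
  · have H := hasSum_zeta_two
    have hsplit := Summable.sum_add_tsum_nat_add (f := fun n : ℕ => (1:ℝ) / (n : ℝ) ^ 2) ν H.summable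
    rw [H.tsum_eq] at hsplit
    have htail : (∑' k : ℕ, (1:ℝ) / (((k + ν : ℕ)) : ℝ) ^ 2)
        = Real.pi ^ 2 / 6 - ∑ i ∈ Finset.range ν, (1:ℝ) / (i : ℝ) ^ 2 := by
      rw [← hsplit]; push_cast; ring
    rw [htail]
    congr 1
    rw [Finset.range_eq_Ico, Finset.sum_eq_sum_Ico_succ_bot (by omega : 0 < ν)]
    have h0 : (1:ℝ) / ((0:ℕ):ℝ) ^ 2 = 0 := by norm_num
    rw [h0, zero_add, show ν = (ν-1)+1 by omega, Finset.Ico_add_one_right_eq_Icc]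
    simp
end
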